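/- Let Q be a finite quiver and I an admissible ideal of kQ such that A = kQ/I is a string algebra. For two strings w and v, the set of canonical homomorphisms {f_a : a ∈ F(w) × S(v) admissible pair} forms a k-basis of Hom_A(M(w), M(v)), where F(w) is the set of factor strings of w, S(v) is the set of substrings of v, and a pair ((E₁, w₀, F₁), (E₂, v₀, F₂)) is admissible if w₀ = v₀ or w₀⁻¹ = v₀, with f_a the map identifying the factor module M(w₀) of M(w) with the submodule M(v₀) of M(v). -/

import Mathlib

open Matrix

/-- A finite quiver, given by vertices, arrows, and source/target maps. -/
structure QuiverData where
  V : Type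
  E : Type
  src : E → V
  tgt : E → V

namespace QuiverData

variable (Q : QuiverData)

/-- A letter: an arrow (`Sum.inl`, direct) or a formal inverse of an arrow (`Sum.inr`). -/
abbrev Letter := Q.E ⊕ Q.E

/-- Source of a letter. -/
def lsrc : Q.Letter → Q.V
  | Sum.inl e => Q.src e
  | Sum.inr e => Q.tgt e

/-- Target of a letter. -/
def ltgt : Q.Letter → Q.V
  | Sum.inl e => Q.tgt e
  | Sum.inr e => Q.src e

/-- Formal inverse of a letter. -/
def linv : Q.Letter → Q.Letter
  | Sum.inl e => Sum.inr e
  | Sum.inr e => Sum.inl e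

/-- A list of arrows is a path when consecutive arrows are composable. -/
def IsPath (ρ : List Q.E) : Prop :=
  ρ.Chain' fun e e' => Q.tgt e = Q.src e'

/-- A walk in the quiver: `n` is its length, `v i` (for `i ≤ n`) are the visited
vertices and `a i` (for `i < n`) the letters. -/
structure Walk where
  n : ℕ
  v : ℕ → Q.V
  a : ℕ → Q.Letter

variable {Q}

/-- `w` is a string for the relations `Irel`: a reduced walk such that no subword of
`w` nor of its inverse is a relation. -/
def Walk.IsString (Irel : List Q.E → Prop) (w : Q.Walk) : Prop :=
  (∀ i < w.n, Q.lsrc (w.a i) = w.v i ∧ Q.ltgt (w.a i) = w.v (i + 1)) ∧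
  (∀ i, i + 1 < w.n → w.a (i + 1) ≠ Q.linv (w.a i)) ∧
  (∀ ρ : List Q.E, Irel ρ → ∀ i, i + ρ.length ≤ w.n →
      ¬ (∀ p e, ρ[(p : ℕ)]? = some e → w.a (i + p) = Sum.inl e) ∧
      ¬ (∀ p e, ρ[(p : ℕ)]? = some e → w.a (i + (ρ.length - 1 - p)) = Sum.inr e))

variable (k : Type) [Field k] [DecidableEq Q.E] [DecidableEq Q.V]

/-- The action of the arrow `e` on the string module `M(w)`, written in the canonical
basis `b_0, …, b_n` of `M(w)` indexed by the positions of the walk `w`. -/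
def actM (w : Q.Walk) (e : Q.E) : Matrix (Fin (w.n + 1)) (Fin (w.n + 1)) k :=
  fun j i =>
    if ((i : ℕ) < w.n ∧ w.a i = Sum.inl e ∧ (j : ℕ) = (i : ℕ) + 1) ∨
       ((j : ℕ) < w.n ∧ w.a j = Sum.inr e ∧ (i : ℕ) = (j : ℕ) + 1) then 1 else 0

/-- The projection of `M(w)` onto the span of basis vectors sitting at the vertex `x`
(encoding the grading of `M(w)` by vertices). -/
def projM (w : Q.Walk) (x : Q.V) : Matrix (Fin (w.n + 1)) (Fin (w.n + 1)) k :=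
  Matrix.diagonal fun i => if w.v i = x then 1 else 0

/-- The space `Hom_A(M(w), M(z))` of module homomorphisms between the string modules
`M(w)` and `M(z)`: matrices commuting with the vertex projections and with the action
of every arrow. -/
def homModule (w z : Q.Walk) :
    Submodule k (Matrix (Fin (z.n + 1)) (Fin (w.n + 1)) k) where
  carrier := {F | (∀ x : Q.V, F * projM k w x = projM k z x * F) ∧
    ∀ e : Q.E, F * actM k w e = actM k z e * F}
  add_mem' := by
    rintro F G ⟨hF1, hF2⟩ ⟨hG1, hG2⟩
    exact ⟨fun x => by rw [Matrix.add_mul, Matrix.mul_add, hF1 x, hG1 x],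
      fun e => by rw [Matrix.add_mul, Matrix.mul_add, hF2 e, hG2 e]⟩
  zero_mem' := ⟨fun x => by simp, fun e => by simp⟩
  smul_mem' := by
    rintro c F ⟨hF1, hF2⟩
    exact ⟨fun x => by rw [Matrix.smul_mul, Matrix.mul_smul, hF1 x],
      fun e => by rw [Matrix.smul_mul, Matrix.mul_smul, hF2 e]⟩

variable (Q)

/-- An admissible pair for the walks `w` and `z`: a factor string of `w` (the window
`[i₁, i₁ + d]` of `w`) and a substring of `z` (the window `[i₂, i₂ + d]` of `z`) whose
induced strings coincide (`rev = false`) or are inverse to each other (`rev = true`). -/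
structure AdmPair (w z : Q.Walk) where
  i₁ : ℕ
  i₂ : ℕ
  d : ℕ
  rev : Bool
  hw : i₁ + d ≤ w.n
  hz : i₂ + d ≤ z.n
  /-- `(E, w₀, F)` is a factor string of `w`: `E` is empty or ends suitably, -/
  factorLeft : i₁ = 0 ∨ ∃ e, w.a (i₁ - 1) = Sum.inr e
  /-- and `F` is empty or starts suitably. -/
  factorRight : i₁ + d = w.n ∨ ∃ e, w.a (i₁ + d) = Sum.inl e
  /-- `(E', v₀, F')` is a substring of `z`. -/
  subLeft : i₂ = 0 ∨ ∃ e, z.a (i₂ - 1) = Sum.inl e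
  subRight : i₂ + d = z.n ∨ ∃ e, z.a (i₂ + d) = Sum.inr e
  /-- `w₀ = v₀` (if `rev = false`) or `w₀⁻¹ = v₀` (if `rev = true`). -/
  match_ : if rev then
      (∀ p ≤ d, w.v (i₁ + p) = z.v (i₂ + d - p)) ∧
        ∀ p < d, w.a (i₁ + p) = Q.linv (z.a (i₂ + d - 1 - p))
    else
      (∀ p ≤ d, w.v (i₁ + p) = z.v (i₂ + p)) ∧
        ∀ p < d, w.a (i₁ + p) = z.a (i₂ + p)
  /-- no double counting of trivial overlaps. -/
  nodup : d = 0 → rev = false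

variable {Q}

/-- The canonical homomorphism `f_a : M(w) → M(z)` attached to an admissible pair:
project onto the factor module given by the window of `w` and include it as the
submodule given by the window of `z`. -/
def canonMat {w z : Q.Walk} (P : AdmPair Q w z) :
    Matrix (Fin (z.n + 1)) (Fin (w.n + 1)) k :=
  fun j i =>
    if P.i₁ ≤ (i : ℕ) ∧ (i : ℕ) ≤ P.i₁ + P.d ∧
        (j : ℕ) = (if P.rev then P.i₂ + P.d - ((i : ℕ) - P.i₁)
                   else P.i₂ + ((i : ℕ) - P.i₁))
      then 1 else 0

end QuiverData

open QuiverData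

namespace CBProof

set_option linter.unusedSectionVars false

variable {Q : QuiverData} [DecidableEq Q.E] [DecidableEq Q.V]
variable (k : Type) [Field k]
variable {w z : Q.Walk}

/-- Extension of a matrix by zero to all natural indices. -/
def ext (F : Matrix (Fin (z.n + 1)) (Fin (w.n + 1)) k) (j i : ℕ) : k :=
  if h : j < z.n + 1 ∧ i < w.n + 1 then F ⟨j, h.1⟩ ⟨i, h.2⟩ else 0

lemma ext_apply (F : Matrix (Fin (z.n + 1)) (Fin (w.n + 1)) k)
    (j : Fin (z.n + 1)) (i : Fin (w.n + 1)) : ext k F (j : ℕ) (i : ℕ) = F j i := by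
  rw [ext, dif_pos ⟨j.isLt, i.isLt⟩]

lemma sum_mul_ite {N : ℕ} (f : Fin N → k) (P : Prop) [Decidable P] (t : ℕ) :
    (∑ x : Fin N, f x * if P ∧ (x : ℕ) = t then 1 else 0) =
      if h : P ∧ t < N then f ⟨t, h.2⟩ else 0 := by
  by_cases hP : P
  · by_cases ht : t < N
    · rw [dif_pos ⟨hP, ht⟩, Finset.sum_eq_single (⟨t, ht⟩ : Fin N)]
      · simp [hP]
      · intro x _ hx
        have : (x : ℕ) ≠ t := fun hxt => hx (Fin.ext hxt)
        simp [this]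
      · simp
    · rw [dif_neg (fun h => ht h.2)]
      apply Finset.sum_eq_zero
      intro x _
      have : (x : ℕ) ≠ t := by omega
      simp [this]
  · rw [dif_neg (fun h => hP h.1)]
    apply Finset.sum_eq_zero
    intro x _
    simp [hP]

lemma ite_mul_sum {N : ℕ} (f : Fin N → k) (P : Prop) [Decidable P] (t : ℕ) :
    (∑ x : Fin N, (if P ∧ (x : ℕ) = t then 1 else 0) * f x) =
      if h : P ∧ t < N then f ⟨t, h.2⟩ else 0 := by
  rw [← sum_mul_ite]
  exact Finset.sum_congr rfl fun x _ => mul_comm _ _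

lemma mul_actM_apply (G : Matrix (Fin (z.n + 1)) (Fin (w.n + 1)) k) (e : Q.E)
    (j : Fin (z.n + 1)) (i : Fin (w.n + 1)) :
    (G * actM k w e) j i =
      (if (i : ℕ) < w.n ∧ w.a (i : ℕ) = Sum.inl e then ext k G j ((i : ℕ) + 1) else 0) +
      (if 1 ≤ (i : ℕ) ∧ w.a ((i : ℕ) - 1) = Sum.inr e then ext k G j ((i : ℕ) - 1) else 0) := by
  rw [Matrix.mul_apply]
  have key : ∀ i' : Fin (w.n + 1), actM k w e i' i =
      (if ((i : ℕ) < w.n ∧ w.a (i : ℕ) = Sum.inl e) ∧ (i' : ℕ) = (i : ℕ) + 1 then 1 else 0) +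
      (if (1 ≤ (i : ℕ) ∧ w.a ((i : ℕ) - 1) = Sum.inr e) ∧ (i' : ℕ) = (i : ℕ) - 1 then 1
        else 0) := by
    intro i'
    have hi := i.isLt
    have hi' := i'.isLt
    unfold actM
    by_cases h1 : ((i : ℕ) < w.n ∧ w.a (i : ℕ) = Sum.inl e) ∧ (i' : ℕ) = (i : ℕ) + 1
    · have h2 : ¬ ((1 ≤ (i : ℕ) ∧ w.a ((i : ℕ) - 1) = Sum.inr e) ∧ (i' : ℕ) = (i : ℕ) - 1) := by
        rintro ⟨-, h⟩; omega
      rw [if_pos (Or.inl ⟨h1.1.1, h1.1.2, h1.2⟩), if_pos h1, if_neg h2]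
      ring
    · by_cases h2 : (1 ≤ (i : ℕ) ∧ w.a ((i : ℕ) - 1) = Sum.inr e) ∧ (i' : ℕ) = (i : ℕ) - 1
      · have hor : ((i : ℕ) < w.n ∧ w.a (i : ℕ) = Sum.inl e ∧ (i' : ℕ) = (i : ℕ) + 1) ∨
            ((i' : ℕ) < w.n ∧ w.a (i' : ℕ) = Sum.inr e ∧ (i : ℕ) = (i' : ℕ) + 1) := by
          refine Or.inr ⟨by omega, ?_, by omega⟩
          have hh : (i' : ℕ) = (i : ℕ) - 1 := h2.2
          rw [hh]; exact h2.1.2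
        rw [if_pos hor, if_neg h1, if_pos h2]
        ring
      · have hor : ¬ (((i : ℕ) < w.n ∧ w.a (i : ℕ) = Sum.inl e ∧ (i' : ℕ) = (i : ℕ) + 1) ∨
            ((i' : ℕ) < w.n ∧ w.a (i' : ℕ) = Sum.inr e ∧ (i : ℕ) = (i' : ℕ) + 1)) := by
          rintro (⟨a, b, c⟩ | ⟨a, b, c⟩)
          · exact h1 ⟨⟨a, b⟩, c⟩
          · refine h2 ⟨⟨by omega, ?_⟩, by omega⟩
            have hh : (i' : ℕ) = (i : ℕ) - 1 := by omega
            rwa [← hh]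
        rw [if_neg hor, if_neg h1, if_neg h2]
        ring
  calc (∑ i', G j i' * actM k w e i' i)
      = (∑ i' : Fin (w.n + 1), G j i' *
          (if ((i : ℕ) < w.n ∧ w.a (i : ℕ) = Sum.inl e) ∧ (i' : ℕ) = (i : ℕ) + 1 then 1 else 0)) +
        (∑ i' : Fin (w.n + 1), G j i' *
          (if (1 ≤ (i : ℕ) ∧ w.a ((i : ℕ) - 1) = Sum.inr e) ∧ (i' : ℕ) = (i : ℕ) - 1 then 1
            else 0)) := by
        rw [← Finset.sum_add_distrib]
        exact Finset.sum_congr rfl fun i' _ => by rw [key i', mul_add]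
    _ = _ := by
        rw [sum_mul_ite, sum_mul_ite]
        congr 1
        · by_cases h : (i : ℕ) < w.n ∧ w.a (i : ℕ) = Sum.inl e
          · rw [dif_pos ⟨h, by omega⟩, if_pos h, ext]
            rw [dif_pos ⟨j.isLt, by omega⟩]
          · rw [dif_neg (fun hh => h hh.1), if_neg h]
        · by_cases h : 1 ≤ (i : ℕ) ∧ w.a ((i : ℕ) - 1) = Sum.inr e
          · rw [dif_pos ⟨h, by omega⟩, if_pos h, ext]
            rw [dif_pos ⟨j.isLt, by omega⟩]
          · rw [dif_neg (fun hh => h hh.1), if_neg h]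

lemma actM_mul_apply (G : Matrix (Fin (z.n + 1)) (Fin (w.n + 1)) k) (e : Q.E)
    (j : Fin (z.n + 1)) (i : Fin (w.n + 1)) :
    (actM k z e * G) j i =
      (if 1 ≤ (j : ℕ) ∧ z.a ((j : ℕ) - 1) = Sum.inl e then ext k G ((j : ℕ) - 1) i else 0) +
      (if (j : ℕ) < z.n ∧ z.a (j : ℕ) = Sum.inr e then ext k G ((j : ℕ) + 1) i else 0) := by
  rw [Matrix.mul_apply]
  have key : ∀ j' : Fin (z.n + 1), actM k z e j j' =
      (if (1 ≤ (j : ℕ) ∧ z.a ((j : ℕ) - 1) = Sum.inl e) ∧ (j' : ℕ) = (j : ℕ) - 1 then 1 else 0) +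
      (if ((j : ℕ) < z.n ∧ z.a (j : ℕ) = Sum.inr e) ∧ (j' : ℕ) = (j : ℕ) + 1 then 1
        else 0) := by
    intro j'
    have hj := j.isLt
    have hj' := j'.isLt
    unfold actM
    by_cases h1 : (1 ≤ (j : ℕ) ∧ z.a ((j : ℕ) - 1) = Sum.inl e) ∧ (j' : ℕ) = (j : ℕ) - 1
    · have h2 : ¬ (((j : ℕ) < z.n ∧ z.a (j : ℕ) = Sum.inr e) ∧ (j' : ℕ) = (j : ℕ) + 1) := by
        rintro ⟨-, h⟩; omega
      have hor : ((j' : ℕ) < z.n ∧ z.a (j' : ℕ) = Sum.inl e ∧ (j : ℕ) = (j' : ℕ) + 1) ∨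
          ((j : ℕ) < z.n ∧ z.a (j : ℕ) = Sum.inr e ∧ (j' : ℕ) = (j : ℕ) + 1) := by
        refine Or.inl ⟨by omega, ?_, by omega⟩
        have hh : (j' : ℕ) = (j : ℕ) - 1 := h1.2
        rw [hh]; exact h1.1.2
      rw [if_pos hor, if_pos h1, if_neg h2]
      ring
    · by_cases h2 : ((j : ℕ) < z.n ∧ z.a (j : ℕ) = Sum.inr e) ∧ (j' : ℕ) = (j : ℕ) + 1
      · rw [if_pos (Or.inr ⟨h2.1.1, h2.1.2, h2.2⟩), if_neg h1, if_pos h2]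
        ring
      · have hor : ¬ (((j' : ℕ) < z.n ∧ z.a (j' : ℕ) = Sum.inl e ∧ (j : ℕ) = (j' : ℕ) + 1) ∨
            ((j : ℕ) < z.n ∧ z.a (j : ℕ) = Sum.inr e ∧ (j' : ℕ) = (j : ℕ) + 1)) := by
          rintro (⟨a, b, c⟩ | ⟨a, b, c⟩)
          · refine h1 ⟨⟨by omega, ?_⟩, by omega⟩
            have hh : (j' : ℕ) = (j : ℕ) - 1 := by omega
            rwa [← hh]
          · exact h2 ⟨⟨a, b⟩, c⟩
        rw [if_neg hor, if_neg h1, if_neg h2]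
        ring
  calc (∑ j', actM k z e j j' * G j' i)
      = (∑ j' : Fin (z.n + 1),
          (if (1 ≤ (j : ℕ) ∧ z.a ((j : ℕ) - 1) = Sum.inl e) ∧ (j' : ℕ) = (j : ℕ) - 1 then 1
            else 0) * G j' i) +
        (∑ j' : Fin (z.n + 1),
          (if ((j : ℕ) < z.n ∧ z.a (j : ℕ) = Sum.inr e) ∧ (j' : ℕ) = (j : ℕ) + 1 then 1
            else 0) * G j' i) := by
        rw [← Finset.sum_add_distrib]
        exact Finset.sum_congr rfl fun j' _ => by rw [key j', add_mul]
    _ = _ := by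
        rw [ite_mul_sum, ite_mul_sum]
        congr 1
        · by_cases h : 1 ≤ (j : ℕ) ∧ z.a ((j : ℕ) - 1) = Sum.inl e
          · rw [dif_pos ⟨h, by omega⟩, if_pos h, ext]
            rw [dif_pos ⟨by omega, i.isLt⟩]
          · rw [dif_neg (fun hh => h hh.1), if_neg h]
        · by_cases h : (j : ℕ) < z.n ∧ z.a (j : ℕ) = Sum.inr e
          · rw [dif_pos ⟨h, by omega⟩, if_pos h, ext]
            rw [dif_pos ⟨by omega, i.isLt⟩]
          · rw [dif_neg (fun hh => h hh.1), if_neg h]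

/-- The master scalar equation for a member of `homModule`. -/
lemma master {F : Matrix (Fin (z.n + 1)) (Fin (w.n + 1)) k}
    (hF : F ∈ homModule k w z) (e : Q.E) {i j : ℕ} (hi : i ≤ w.n) (hj : j ≤ z.n) :
    (if i < w.n ∧ w.a i = Sum.inl e then ext k F j (i + 1) else 0) +
      (if 1 ≤ i ∧ w.a (i - 1) = Sum.inr e then ext k F j (i - 1) else 0) =
    (if 1 ≤ j ∧ z.a (j - 1) = Sum.inl e then ext k F (j - 1) i else 0) +
      (if j < z.n ∧ z.a j = Sum.inr e then ext k F (j + 1) i else 0) := by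
  have h := congrFun (congrFun (hF.2 e) ⟨j, by omega⟩) ⟨i, by omega⟩
  rw [mul_actM_apply, actM_mul_apply] at h
  exact h

/-- Entries of a hom vanish unless the vertices match. -/
lemma vertex_match {F : Matrix (Fin (z.n + 1)) (Fin (w.n + 1)) k}
    (hF : F ∈ homModule k w z) {i j : ℕ} (hi : i ≤ w.n) (hj : j ≤ z.n)
    (hne : ext k F j i ≠ 0) : w.v i = z.v j := by
  by_contra hne'
  apply hne
  have h := congrFun (congrFun (hF.1 (w.v i)) ⟨j, by omega⟩) ⟨i, by omega⟩
  rw [projM, projM, Matrix.mul_diagonal, Matrix.diagonal_mul] at h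
  rw [if_pos rfl, if_neg (fun hh : z.v j = w.v i => hne' hh.symm), mul_one, zero_mul] at h
  rw [ext, dif_pos ⟨by omega, by omega⟩]
  exact h

@[simp]
lemma linv_linv (x : Q.Letter) : Q.linv (Q.linv x) = x := by cases x <;> rfl

/-- The `z`-row of the support of `canonMat P` in column `i`. -/
def sig (P : AdmPair Q w z) (i : ℕ) : ℕ :=
  if P.rev then P.i₂ + P.d - (i - P.i₁) else P.i₂ + (i - P.i₁)

/-- The support of `canonMat P`. -/
def sp (P : AdmPair Q w z) (i j : ℕ) : Prop :=
  P.i₁ ≤ i ∧ i ≤ P.i₁ + P.d ∧ j = sig P i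

instance (P : AdmPair Q w z) (i j : ℕ) : Decidable (sp P i j) := by
  unfold sp; infer_instance

lemma ext_canonMat (P : AdmPair Q w z) (j i : ℕ) :
    ext k (canonMat k P) j i = if j ≤ z.n ∧ i ≤ w.n ∧ sp P i j then 1 else 0 := by
  rw [ext]
  by_cases h : j < z.n + 1 ∧ i < w.n + 1
  · rw [dif_pos h, canonMat]
    have : (P.i₁ ≤ i ∧ i ≤ P.i₁ + P.d ∧
        j = (if P.rev then P.i₂ + P.d - (i - P.i₁) else P.i₂ + (i - P.i₁)))
        ↔ (j ≤ z.n ∧ i ≤ w.n ∧ sp P i j) := by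
      unfold sp sig; constructor
      · rintro ⟨a, b, c⟩; exact ⟨by omega, by omega, a, b, c⟩
      · rintro ⟨_, _, a, b, c⟩; exact ⟨a, b, c⟩
    rw [if_congr this rfl rfl]
  · rw [dif_neg h, if_neg (fun hh => h ⟨by omega, by omega⟩)]

lemma ite_ite_and {P Q : Prop} [Decidable P] [Decidable Q] :
    (if P then (if Q then (1 : k) else 0) else 0) = if P ∧ Q then 1 else 0 := by
  split_ifs <;> first | rfl | tauto

lemma ite_one_add_ite_one {P₁ P₂ Q₁ Q₂ : Prop}
    [Decidable P₁] [Decidable P₂] [Decidable Q₁] [Decidable Q₂]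
    (h : P₁ ∨ P₂ ↔ Q₁ ∨ Q₂) (hP : ¬(P₁ ∧ P₂)) (hQ : ¬(Q₁ ∧ Q₂)) :
    (if P₁ then (1 : k) else 0) + (if P₂ then 1 else 0) =
      (if Q₁ then 1 else 0) + (if Q₂ then 1 else 0) := by
  by_cases hd : P₁ ∨ P₂
  · have hq := h.mp hd
    rcases hd with p | p <;> rcases hq with q | q
    · rw [if_pos p, if_neg (fun x => hP ⟨p, x⟩), if_pos q, if_neg (fun x => hQ ⟨q, x⟩)]
    · rw [if_pos p, if_neg (fun x => hP ⟨p, x⟩), if_neg (fun x => hQ ⟨x, q⟩), if_pos q]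
      ring
    · rw [if_neg (fun x => hP ⟨x, p⟩), if_pos p, if_pos q, if_neg (fun x => hQ ⟨q, x⟩)]
      ring
    · rw [if_neg (fun x => hP ⟨x, p⟩), if_pos p, if_neg (fun x => hQ ⟨x, q⟩), if_pos q]
  · have hq : ¬(Q₁ ∨ Q₂) := fun x => hd (h.mpr x)
    push_neg at hd hq
    rw [if_neg hd.1, if_neg hd.2, if_neg hq.1, if_neg hq.2]

/-- The key combinatorial identity showing `canonMat P` commutes with the action of `e`. -/
lemma canon_iff (P : AdmPair Q w z) (e : Q.E) {i j : ℕ} (hi : i ≤ w.n) (hj : j ≤ z.n) :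
    ((i < w.n ∧ w.a i = Sum.inl e) ∧ sp P (i + 1) j ∨
      (1 ≤ i ∧ w.a (i - 1) = Sum.inr e) ∧ sp P (i - 1) j) ↔
    ((1 ≤ j ∧ z.a (j - 1) = Sum.inl e) ∧ sp P i (j - 1) ∨
      (j < z.n ∧ z.a j = Sum.inr e) ∧ sp P i (j + 1)) := by
  have hwn := P.hw
  have hzn := P.hz
  rcases hrev : P.rev with _ | _
  · -- rev = false
    obtain ⟨hv, ha⟩ : (∀ p ≤ P.d, w.v (P.i₁ + p) = z.v (P.i₂ + p)) ∧
        ∀ p < P.d, w.a (P.i₁ + p) = z.a (P.i₂ + p) := by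
      have := P.match_; rwa [hrev, if_neg (by simp)] at this
    unfold sp sig
    rw [hrev]
    simp only [Bool.false_eq_true, if_false]
    constructor
    · rintro (⟨⟨hin, hai⟩, h1, h2, h3⟩ | ⟨⟨hi1, hai⟩, h1, h2, h3⟩)
      · by_cases hii : P.i₁ ≤ i
        · left
          have hidx : P.i₁ + (i - P.i₁) = i := by omega
          have hz : z.a (P.i₂ + (i - P.i₁)) = Sum.inl e := by
            rw [← ha _ (by omega), hidx, hai]
          refine ⟨⟨by omega, ?_⟩, by omega, by omega, by omega⟩
          rw [show j - 1 = P.i₂ + (i - P.i₁) by omega]; exact hz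
        · exfalso
          have : P.i₁ = i + 1 := by omega
          rcases P.factorLeft with h0 | ⟨e', he'⟩
          · omega
          · rw [this, show i + 1 - 1 = i from rfl, hai] at he'; exact absurd he' (by simp)
      · by_cases hii : i - 1 < P.i₁ + P.d
        · right
          have hidx : P.i₁ + (i - 1 - P.i₁) = i - 1 := by omega
          have hz : z.a (P.i₂ + (i - 1 - P.i₁)) = Sum.inr e := by
            rw [← ha _ (by omega), hidx, hai]
          refine ⟨⟨by omega, ?_⟩, by omega, by omega, by omega⟩
          rw [show j = P.i₂ + (i - 1 - P.i₁) from h3]; exact hz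
        · exfalso
          have : i - 1 = P.i₁ + P.d := by omega
          rcases P.factorRight with h0 | ⟨e', he'⟩
          · omega
          · rw [← this, hai] at he'; exact absurd he' (by simp)
    · rintro (⟨⟨hj1, haj⟩, h1, h2, h3⟩ | ⟨⟨hjm, haj⟩, h1, h2, h3⟩)
      · by_cases hii : i < P.i₁ + P.d
        · left
          have hidx : P.i₁ + (i - P.i₁) = i := by omega
          have hwa : w.a i = Sum.inl e := by
            rw [← hidx, ha _ (by omega), show P.i₂ + (i - P.i₁) = j - 1 by omega]
            exact haj
          exact ⟨⟨by omega, hwa⟩, by omega, by omega, by omega⟩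
        · exfalso
          have hie : i = P.i₁ + P.d := by omega
          rcases P.subRight with h0 | ⟨e', he'⟩
          · omega
          · rw [show P.i₂ + P.d = j - 1 by omega, haj] at he'; exact absurd he' (by simp)
      · by_cases hii : P.i₁ < i
        · right
          have hidx : P.i₁ + (i - 1 - P.i₁) = i - 1 := by omega
          have hwa : w.a (i - 1) = Sum.inr e := by
            rw [← hidx, ha _ (by omega), show P.i₂ + (i - 1 - P.i₁) = j by omega]
            exact haj
          exact ⟨⟨by omega, hwa⟩, by omega, by omega, by omega⟩
        · exfalso
          have hie : i = P.i₁ := by omega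
          rcases P.subLeft with h0 | ⟨e', he'⟩
          · omega
          · rw [show P.i₂ - 1 = j by omega, haj] at he'; exact absurd he' (by simp)
  · -- rev = true
    obtain ⟨hv, ha⟩ : (∀ p ≤ P.d, w.v (P.i₁ + p) = z.v (P.i₂ + P.d - p)) ∧
        ∀ p < P.d, w.a (P.i₁ + p) = Q.linv (z.a (P.i₂ + P.d - 1 - p)) := by
      have := P.match_; rwa [hrev, if_pos rfl] at this
    have ha' : ∀ p < P.d, z.a (P.i₂ + P.d - 1 - p) = Q.linv (w.a (P.i₁ + p)) := by
      intro p hp; rw [ha p hp, linv_linv]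
    unfold sp sig
    rw [hrev]
    simp only [if_true]
    constructor
    · rintro (⟨⟨hin, hai⟩, h1, h2, h3⟩ | ⟨⟨hi1, hai⟩, h1, h2, h3⟩)
      · by_cases hii : P.i₁ ≤ i
        · right
          have hidx : P.i₁ + (i - P.i₁) = i := by omega
          have hz : z.a (P.i₂ + P.d - 1 - (i - P.i₁)) = Sum.inr e := by
            rw [ha' _ (by omega), hidx, hai]; rfl
          refine ⟨⟨by omega, ?_⟩, by omega, by omega, by omega⟩
          rw [show j = P.i₂ + P.d - 1 - (i - P.i₁) by omega]; exact hz
        · exfalso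
          have : P.i₁ = i + 1 := by omega
          rcases P.factorLeft with h0 | ⟨e', he'⟩
          · omega
          · rw [this, show i + 1 - 1 = i from rfl, hai] at he'; exact absurd he' (by simp)
      · by_cases hii : i - 1 < P.i₁ + P.d
        · left
          have hidx : P.i₁ + (i - 1 - P.i₁) = i - 1 := by omega
          have hz : z.a (P.i₂ + P.d - 1 - (i - 1 - P.i₁)) = Sum.inl e := by
            rw [ha' _ (by omega), hidx, hai]; rfl
          refine ⟨⟨by omega, ?_⟩, by omega, by omega, by omega⟩
          rw [show j - 1 = P.i₂ + P.d - 1 - (i - 1 - P.i₁) by omega]; exact hz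
        · exfalso
          have : i - 1 = P.i₁ + P.d := by omega
          rcases P.factorRight with h0 | ⟨e', he'⟩
          · omega
          · rw [← this, hai] at he'; exact absurd he' (by simp)
    · rintro (⟨⟨hj1, haj⟩, h1, h2, h3⟩ | ⟨⟨hjm, haj⟩, h1, h2, h3⟩)
      · by_cases hii : P.i₁ < i
        · right
          have hidx : P.i₁ + (i - 1 - P.i₁) = i - 1 := by omega
          have hwa : w.a (i - 1) = Sum.inr e := by
            rw [← hidx, ha _ (by omega),
              show P.i₂ + P.d - 1 - (i - 1 - P.i₁) = j - 1 by omega, haj]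
            rfl
          exact ⟨⟨by omega, hwa⟩, by omega, by omega, by omega⟩
        · exfalso
          have hie : i = P.i₁ := by omega
          rcases P.subRight with h0 | ⟨e', he'⟩
          · omega
          · rw [show P.i₂ + P.d = j - 1 by omega, haj] at he'; exact absurd he' (by simp)
      · by_cases hii : i < P.i₁ + P.d
        · left
          have hidx : P.i₁ + (i - P.i₁) = i := by omega
          have hwa : w.a i = Sum.inl e := by
            rw [← hidx, ha _ (by omega),
              show P.i₂ + P.d - 1 - (i - P.i₁) = j by omega, haj]
            rfl
          exact ⟨⟨by omega, hwa⟩, by omega, by omega, by omega⟩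
        · exfalso
          have hie : i = P.i₁ + P.d := by omega
          rcases P.subLeft with h0 | ⟨e', he'⟩
          · omega
          · rw [show P.i₂ - 1 = j by omega, haj] at he'; exact absurd he' (by simp)

/-- The vertex part of the support of `canonMat P`. -/
lemma sp_vertex (P : AdmPair Q w z) {i j : ℕ} (h : sp P i j) : w.v i = z.v j := by
  obtain ⟨h1, h2, h3⟩ := h
  rcases hrev : P.rev with _ | _
  · obtain ⟨hv, -⟩ : (∀ p ≤ P.d, w.v (P.i₁ + p) = z.v (P.i₂ + p)) ∧
        ∀ p < P.d, w.a (P.i₁ + p) = z.a (P.i₂ + p) := by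
      have := P.match_; rwa [hrev, if_neg (by simp)] at this
    have := hv (i - P.i₁) (by omega)
    rw [show P.i₁ + (i - P.i₁) = i by omega] at this
    rw [this, h3]
    unfold sig; rw [hrev]; simp
  · obtain ⟨hv, -⟩ : (∀ p ≤ P.d, w.v (P.i₁ + p) = z.v (P.i₂ + P.d - p)) ∧
        ∀ p < P.d, w.a (P.i₁ + p) = Q.linv (z.a (P.i₂ + P.d - 1 - p)) := by
      have := P.match_; rwa [hrev, if_pos rfl] at this
    have := hv (i - P.i₁) (by omega)
    rw [show P.i₁ + (i - P.i₁) = i by omega] at this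
    rw [this, h3]
    unfold sig; rw [hrev]; simp

/-- Part 1: each canonical matrix is a homomorphism. -/
lemma canon_mem (P : AdmPair Q w z) : canonMat k P ∈ homModule k w z := by
  constructor
  · intro x
    ext jj ii
    rw [projM, projM, Matrix.mul_diagonal, Matrix.diagonal_mul]
    by_cases hsp : sp P (ii : ℕ) (jj : ℕ)
    · have hvv : w.v (ii : ℕ) = z.v (jj : ℕ) := sp_vertex P hsp
      simp only [hvv]
      ring
    · have : canonMat k P jj ii = 0 := by
        have := ext_canonMat k P (jj : ℕ) (ii : ℕ)
        rw [ext_apply] at this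
        rw [this, if_neg (fun h => hsp h.2.2)]
      rw [this]; ring
  · intro e
    ext jj ii
    rw [mul_actM_apply, actM_mul_apply]
    have hi : (ii : ℕ) ≤ w.n := by omega
    have hj : (jj : ℕ) ≤ z.n := by omega
    rw [ext_canonMat, ext_canonMat, ext_canonMat, ext_canonMat,
      ite_ite_and, ite_ite_and, ite_ite_and, ite_ite_and]
    have f1 : (((ii : ℕ) < w.n ∧ w.a (ii : ℕ) = Sum.inl e) ∧
        (jj : ℕ) ≤ z.n ∧ (ii : ℕ) + 1 ≤ w.n ∧ sp P ((ii : ℕ) + 1) (jj : ℕ)) ↔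
        (((ii : ℕ) < w.n ∧ w.a (ii : ℕ) = Sum.inl e) ∧ sp P ((ii : ℕ) + 1) (jj : ℕ)) := by
      constructor
      · rintro ⟨a, -, -, b⟩; exact ⟨a, b⟩
      · rintro ⟨a, b⟩; exact ⟨a, hj, by omega, b⟩
    have f2 : ((1 ≤ (ii : ℕ) ∧ w.a ((ii : ℕ) - 1) = Sum.inr e) ∧
        (jj : ℕ) ≤ z.n ∧ (ii : ℕ) - 1 ≤ w.n ∧ sp P ((ii : ℕ) - 1) (jj : ℕ)) ↔
        ((1 ≤ (ii : ℕ) ∧ w.a ((ii : ℕ) - 1) = Sum.inr e) ∧ sp P ((ii : ℕ) - 1) (jj : ℕ)) := by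
      constructor
      · rintro ⟨a, -, -, b⟩; exact ⟨a, b⟩
      · rintro ⟨a, b⟩; exact ⟨a, hj, by omega, b⟩
    have f3 : ((1 ≤ (jj : ℕ) ∧ z.a ((jj : ℕ) - 1) = Sum.inl e) ∧
        (jj : ℕ) - 1 ≤ z.n ∧ (ii : ℕ) ≤ w.n ∧ sp P (ii : ℕ) ((jj : ℕ) - 1)) ↔
        ((1 ≤ (jj : ℕ) ∧ z.a ((jj : ℕ) - 1) = Sum.inl e) ∧ sp P (ii : ℕ) ((jj : ℕ) - 1)) := by
      constructor
      · rintro ⟨a, -, -, b⟩; exact ⟨a, b⟩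
      · rintro ⟨a, b⟩; exact ⟨a, by omega, hi, b⟩
    have f4 : (((jj : ℕ) < z.n ∧ z.a (jj : ℕ) = Sum.inr e) ∧
        (jj : ℕ) + 1 ≤ z.n ∧ (ii : ℕ) ≤ w.n ∧ sp P (ii : ℕ) ((jj : ℕ) + 1)) ↔
        (((jj : ℕ) < z.n ∧ z.a (jj : ℕ) = Sum.inr e) ∧ sp P (ii : ℕ) ((jj : ℕ) + 1)) := by
      constructor
      · rintro ⟨a, -, -, b⟩; exact ⟨a, b⟩
      · rintro ⟨a, b⟩; exact ⟨a, by omega, hi, b⟩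
    rw [if_congr f1 rfl rfl, if_congr f2 rfl rfl, if_congr f3 rfl rfl, if_congr f4 rfl rfl]
    refine ite_one_add_ite_one k (canon_iff P e hi hj) ?_ ?_
    · rintro ⟨⟨⟨-, -⟩, a1, b1, c1'⟩, ⟨-, hc2⟩, a2, b2, c2'⟩
      unfold sig at c1' c2'
      rcases hr : P.rev <;> rw [hr] at c1' c2' <;> simp at c1' c2' <;> omega
    · rintro ⟨⟨⟨hj1, -⟩, a1, b1, c1'⟩, ⟨-, -⟩, a2, b2, c2'⟩
      omega

section Local

variable {F : Matrix (Fin (z.n + 1)) (Fin (w.n + 1)) k} (hF : F ∈ homModule k w z)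
  (hwred : ∀ i, i + 1 < w.n → w.a (i + 1) ≠ Q.linv (w.a i))
  (hzred : ∀ i, i + 1 < z.n → z.a (i + 1) ≠ Q.linv (z.a i))

include hF hwred hzred

/-- Constancy along a matching diagonal step (`rev = false` direction). -/
lemma step_NE {i j : ℕ} (hi : i < w.n) (hj : j < z.n) (hm : w.a i = z.a j) :
    ext k F (j + 1) (i + 1) = ext k F j i := by
  rcases hwa : w.a i with e | e
  · have hza : z.a j = Sum.inl e := by rw [← hm, hwa]
    have M := master k hF e (i := i) (j := j + 1) (by omega) (by omega)
    have k2 : ¬(1 ≤ i ∧ w.a (i - 1) = Sum.inr e) := by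
      rintro ⟨h1, h2⟩
      exact hwred (i - 1) (by omega)
        (by rw [show i - 1 + 1 = i by omega, hwa, h2]; rfl)
    have k4 : ¬(j + 1 < z.n ∧ z.a (j + 1) = Sum.inr e) := by
      rintro ⟨h1, h2⟩
      exact hzred j h1 (by rw [h2, hza]; rfl)
    rw [if_pos ⟨hi, hwa⟩, if_neg k2,
      if_pos (⟨by omega, by simpa using hza⟩ : 1 ≤ j + 1 ∧ z.a (j + 1 - 1) = Sum.inl e),
      if_neg k4] at M
    simpa using M
  · have hza : z.a j = Sum.inr e := by rw [← hm, hwa]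
    have M := master k hF e (i := i + 1) (j := j) (by omega) (by omega)
    have k1 : ¬(i + 1 < w.n ∧ w.a (i + 1) = Sum.inl e) := by
      rintro ⟨h1, h2⟩
      exact hwred i h1 (by rw [h2, hwa]; rfl)
    have k3 : ¬(1 ≤ j ∧ z.a (j - 1) = Sum.inl e) := by
      rintro ⟨h1, h2⟩
      exact hzred (j - 1) (by omega)
        (by rw [show j - 1 + 1 = j by omega, hza, h2]; rfl)
    rw [if_neg k1,
      if_pos (⟨by omega, by simpa using hwa⟩ : 1 ≤ i + 1 ∧ w.a (i + 1 - 1) = Sum.inr e),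
      if_neg k3, if_pos ⟨hj, hza⟩] at M
    simpa using M.symm

/-- Constancy along a matching antidiagonal step (`rev = true` direction). -/
lemma step_SE {i j : ℕ} (hi : i < w.n) (hj1 : 1 ≤ j) (hj : j ≤ z.n)
    (hm : w.a i = Q.linv (z.a (j - 1))) :
    ext k F (j - 1) (i + 1) = ext k F j i := by
  rcases hza : z.a (j - 1) with e | e
  · -- z-letter direct, w-letter inverse
    have hwa : w.a i = Sum.inr e := by rw [hm, hza]; rfl
    have M := master k hF e (i := i + 1) (j := j) (by omega) hj
    have k1 : ¬(i + 1 < w.n ∧ w.a (i + 1) = Sum.inl e) := by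
      rintro ⟨h1, h2⟩
      exact hwred i h1 (by rw [h2, hwa]; rfl)
    have k4 : ¬(j < z.n ∧ z.a j = Sum.inr e) := by
      rintro ⟨h1, h2⟩
      exact hzred (j - 1) (by omega)
        (by rw [show j - 1 + 1 = j by omega, h2, hza]; rfl)
    rw [if_neg k1,
      if_pos (⟨by omega, by simpa using hwa⟩ : 1 ≤ i + 1 ∧ w.a (i + 1 - 1) = Sum.inr e),
      if_pos ⟨hj1, hza⟩, if_neg k4] at M
    simpa using M.symm
  · -- z-letter inverse, w-letter direct
    have hwa : w.a i = Sum.inl e := by rw [hm, hza]; rfl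
    have M := master k hF e (i := i) (j := j - 1) (by omega) (by omega)
    have k2 : ¬(1 ≤ i ∧ w.a (i - 1) = Sum.inr e) := by
      rintro ⟨h1, h2⟩
      exact hwred (i - 1) (by omega)
        (by rw [show i - 1 + 1 = i by omega, hwa, h2]; rfl)
    have k3 : ¬(1 ≤ j - 1 ∧ z.a (j - 1 - 1) = Sum.inl e) := by
      rintro ⟨h1, h2⟩
      exact hzred (j - 1 - 1) (by omega)
        (by rw [show j - 1 - 1 + 1 = j - 1 by omega, hza, h2]; rfl)
    have M' : ext k F (j - 1) (i + 1) = ext k F (j - 1 + 1) i := by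
      rw [if_pos ⟨hi, hwa⟩, if_neg k2, if_neg k3,
        if_pos (⟨by omega, hza⟩ : j - 1 < z.n ∧ z.a (j - 1) = Sum.inr e)] at M
      simpa using M
    rw [M', show j - 1 + 1 = j by omega]

/-- Vanishing at an east end where the `w`-condition fails. -/
lemma van_E {e : Q.E} {i j : ℕ} (hi : i < w.n) (hj : j ≤ z.n)
    (hwa : w.a i = Sum.inr e)
    (hnSE : ¬(1 ≤ j ∧ z.a (j - 1) = Sum.inl e))
    (hnNE : ¬(j < z.n ∧ z.a j = Sum.inr e)) : ext k F j i = 0 := by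
  have M := master k hF e (i := i + 1) (j := j) (by omega) hj
  have k1 : ¬(i + 1 < w.n ∧ w.a (i + 1) = Sum.inl e) := by
    rintro ⟨h1, h2⟩
    exact hwred i h1 (by rw [h2, hwa]; rfl)
  rw [if_neg k1,
    if_pos (⟨by omega, by simpa using hwa⟩ : 1 ≤ i + 1 ∧ w.a (i + 1 - 1) = Sum.inr e),
    if_neg hnSE, if_neg hnNE] at M
  simpa using M

/-- Vanishing at a west end where the `w`-condition fails. -/
lemma van_W {e : Q.E} {i j : ℕ} (hi1 : 1 ≤ i) (hi : i ≤ w.n) (hj : j ≤ z.n)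
    (hwa : w.a (i - 1) = Sum.inl e)
    (hnNW : ¬(j < z.n ∧ z.a j = Sum.inr e))
    (hnSW : ¬(1 ≤ j ∧ z.a (j - 1) = Sum.inl e)) : ext k F j i = 0 := by
  have M := master k hF e (i := i - 1) (j := j) (by omega) hj
  have k2 : ¬(1 ≤ i - 1 ∧ w.a (i - 1 - 1) = Sum.inr e) := by
    rintro ⟨h1, h2⟩
    exact hwred (i - 1 - 1) (by omega)
      (by rw [show i - 1 - 1 + 1 = i - 1 by omega, hwa, h2]; rfl)
  have M' : ext k F j (i - 1 + 1) = 0 := by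
    rw [if_pos (⟨by omega, hwa⟩ : i - 1 < w.n ∧ w.a (i - 1) = Sum.inl e),
      if_neg k2, if_neg hnSW, if_neg hnNW] at M
    simpa using M
  rwa [show i - 1 + 1 = i by omega] at M'

/-- Vanishing at an end where the `z`-condition of type `NE/NW` fails. -/
lemma van_N {e : Q.E} {i j : ℕ} (hj : j < z.n) (hi : i ≤ w.n)
    (hza : z.a j = Sum.inl e)
    (hnNE : ¬(i < w.n ∧ w.a i = Sum.inl e))
    (hnNW : ¬(1 ≤ i ∧ w.a (i - 1) = Sum.inr e)) : ext k F j i = 0 := by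
  have M := master k hF e (i := i) (j := j + 1) hi (by omega)
  have k4 : ¬(j + 1 < z.n ∧ z.a (j + 1) = Sum.inr e) := by
    rintro ⟨h1, h2⟩
    exact hzred j h1 (by rw [h2, hza]; rfl)
  rw [if_neg hnNE, if_neg hnNW,
    if_pos (⟨by omega, by simpa using hza⟩ : 1 ≤ j + 1 ∧ z.a (j + 1 - 1) = Sum.inl e),
    if_neg k4] at M
  simpa using M.symm

/-- Vanishing at an end where the `z`-condition of type `SE/SW` fails. -/
lemma van_S {e : Q.E} {i j : ℕ} (hj1 : 1 ≤ j) (hj : j ≤ z.n) (hi : i ≤ w.n)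
    (hza : z.a (j - 1) = Sum.inr e)
    (hnSE : ¬(i < w.n ∧ w.a i = Sum.inl e))
    (hnSW : ¬(1 ≤ i ∧ w.a (i - 1) = Sum.inr e)) : ext k F j i = 0 := by
  have M := master k hF e (i := i) (j := j - 1) hi (by omega)
  have k3 : ¬(1 ≤ j - 1 ∧ z.a (j - 1 - 1) = Sum.inl e) := by
    rintro ⟨h1, h2⟩
    exact hzred (j - 1 - 1) (by omega)
      (by rw [show j - 1 - 1 + 1 = j - 1 by omega, hza, h2]; rfl)
  have M' : (0 : k) = ext k F (j - 1 + 1) i := by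
    rw [if_neg hnSE, if_neg hnSW, if_neg k3,
      if_pos (⟨by omega, hza⟩ : j - 1 < z.n ∧ z.a (j - 1) = Sum.inr e)] at M
    simpa using M
  rw [show j = j - 1 + 1 by omega]
  exact M'.symm

end Local

section Runs

/-- North-east extension: matching step `(i,j) → (i+1,j+1)`. -/
def NE (w z : Q.Walk) (i j : ℕ) : Prop := i < w.n ∧ j < z.n ∧ w.a i = z.a j

/-- South-east extension: matching step `(i,j) → (i+1,j-1)`. -/
def SE (w z : Q.Walk) (i j : ℕ) : Prop := i < w.n ∧ 1 ≤ j ∧ w.a i = Q.linv (z.a (j - 1))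

/-- South-west extension: matching step `(i,j) → (i-1,j-1)`. -/
def SW (w z : Q.Walk) (i j : ℕ) : Prop := 1 ≤ i ∧ 1 ≤ j ∧ w.a (i - 1) = z.a (j - 1)

/-- North-west extension: matching step `(i,j) → (i-1,j+1)`. -/
def NW (w z : Q.Walk) (i j : ℕ) : Prop := 1 ≤ i ∧ j < z.n ∧ w.a (i - 1) = Q.linv (z.a j)

instance (w z : Q.Walk) (i j : ℕ) : Decidable (NE w z i j) := by unfold NE; infer_instance
instance (w z : Q.Walk) (i j : ℕ) : Decidable (SE w z i j) := by unfold SE; infer_instance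
instance (w z : Q.Walk) (i j : ℕ) : Decidable (SW w z i j) := by unfold SW; infer_instance
instance (w z : Q.Walk) (i j : ℕ) : Decidable (NW w z i j) := by unfold NW; infer_instance

def runNE (w z : Q.Walk) (i j : ℕ) : ℕ :=
  if h : NE w z i j then runNE w z (i + 1) (j + 1) + 1 else 0
termination_by w.n - i
decreasing_by have := h.1; omega

def runSE (w z : Q.Walk) (i j : ℕ) : ℕ :=
  if h : SE w z i j then runSE w z (i + 1) (j - 1) + 1 else 0
termination_by w.n - i
decreasing_by have := h.1; omega

def runSW (w z : Q.Walk) (i j : ℕ) : ℕ :=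
  if h : SW w z i j then runSW w z (i - 1) (j - 1) + 1 else 0
termination_by i
decreasing_by have := h.1; omega

def runNW (w z : Q.Walk) (i j : ℕ) : ℕ :=
  if h : NW w z i j then runNW w z (i - 1) (j + 1) + 1 else 0
termination_by i
decreasing_by have := h.1; omega

lemma runNE_pos {i j : ℕ} (h : 0 < runNE w z i j) : NE w z i j := by
  by_contra hn; rw [runNE, dif_neg hn] at h; omega

lemma runSE_pos {i j : ℕ} (h : 0 < runSE w z i j) : SE w z i j := by
  by_contra hn; rw [runSE, dif_neg hn] at h; omega

lemma runSW_pos {i j : ℕ} (h : 0 < runSW w z i j) : SW w z i j := by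
  by_contra hn; rw [runSW, dif_neg hn] at h; omega

lemma runNW_pos {i j : ℕ} (h : 0 < runNW w z i j) : NW w z i j := by
  by_contra hn; rw [runNW, dif_neg hn] at h; omega

lemma runNE_le (i j : ℕ) (hi : i ≤ w.n) (hj : j ≤ z.n) :
    i + runNE w z i j ≤ w.n ∧ j + runNE w z i j ≤ z.n := by
  by_cases h : NE w z i j
  · have ih := runNE_le (i + 1) (j + 1) (by have := h.1; omega) (by have := h.2.1; omega)
    rw [runNE, dif_pos h]; omega
  · rw [runNE, dif_neg h]; omega
termination_by w.n - i
decreasing_by have := h.1; omega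

lemma runSE_le (i j : ℕ) (hi : i ≤ w.n) :
    i + runSE w z i j ≤ w.n ∧ runSE w z i j ≤ j := by
  by_cases h : SE w z i j
  · have ih := runSE_le (i + 1) (j - 1) (by have := h.1; omega)
    rw [runSE, dif_pos h]; have := h.2.1; omega
  · rw [runSE, dif_neg h]; omega
termination_by w.n - i
decreasing_by have := h.1; omega

lemma runSW_le (i j : ℕ) : runSW w z i j ≤ i ∧ runSW w z i j ≤ j := by
  by_cases h : SW w z i j
  · have ih := runSW_le (i - 1) (j - 1)
    rw [runSW, dif_pos h]; have h1 := h.1; have h2 := h.2.1; omega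
  · rw [runSW, dif_neg h]; omega
termination_by i
decreasing_by have := h.1; omega

lemma runNW_le (i j : ℕ) (hj : j ≤ z.n) :
    runNW w z i j ≤ i ∧ j + runNW w z i j ≤ z.n := by
  by_cases h : NW w z i j
  · have ih := runNW_le (i - 1) (j + 1) (by have := h.2.1; omega)
    rw [runNW, dif_pos h]; have h1 := h.1; omega
  · rw [runNW, dif_neg h]; omega
termination_by i
decreasing_by have := h.1; omega

lemma runNE_chain (i j : ℕ) : ∀ p < runNE w z i j, NE w z (i + p) (j + p) := by
  intro p hp
  match p with
  | 0 => simpa using runNE_pos (by omega)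
  | q + 1 =>
    have hne : NE w z i j := runNE_pos (by omega)
    rw [runNE, dif_pos hne] at hp
    have := runNE_chain (i + 1) (j + 1) q (by omega)
    rw [show i + (q + 1) = i + 1 + q by omega, show j + (q + 1) = j + 1 + q by omega]
    exact this
termination_by w.n - i
decreasing_by have := hne.1; omega

lemma runSE_chain (i j : ℕ) : ∀ p < runSE w z i j, SE w z (i + p) (j - p) := by
  intro p hp
  match p with
  | 0 => simpa using runSE_pos (by omega)
  | q + 1 =>
    have hne : SE w z i j := runSE_pos (by omega)
    rw [runSE, dif_pos hne] at hp
    have := runSE_chain (i + 1) (j - 1) q (by omega)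
    have h1 := hne.2.1
    rw [show i + (q + 1) = i + 1 + q by omega, show j - (q + 1) = j - 1 - q by omega]
    exact this
termination_by w.n - i
decreasing_by have := hne.1; omega

lemma runSW_chain (i j : ℕ) : ∀ p < runSW w z i j, SW w z (i - p) (j - p) := by
  intro p hp
  match p with
  | 0 => simpa using runSW_pos (by omega)
  | q + 1 =>
    have hne : SW w z i j := runSW_pos (by omega)
    rw [runSW, dif_pos hne] at hp
    have := runSW_chain (i - 1) (j - 1) q (by omega)
    have h1 := hne.1
    have h2 := hne.2.1
    rw [show i - (q + 1) = i - 1 - q by omega, show j - (q + 1) = j - 1 - q by omega]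
    exact this
termination_by i
decreasing_by have := hne.1; omega

lemma runNW_chain (i j : ℕ) : ∀ p < runNW w z i j, NW w z (i - p) (j + p) := by
  intro p hp
  match p with
  | 0 => simpa using runNW_pos (by omega)
  | q + 1 =>
    have hne : NW w z i j := runNW_pos (by omega)
    rw [runNW, dif_pos hne] at hp
    have := runNW_chain (i - 1) (j + 1) q (by omega)
    have h1 := hne.1
    rw [show i - (q + 1) = i - 1 - q by omega, show j + (q + 1) = j + 1 + q by omega]
    exact this
termination_by i
decreasing_by have := hne.1; omega

lemma runNE_stop (i j : ℕ) : ¬ NE w z (i + runNE w z i j) (j + runNE w z i j) := by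
  by_cases h : NE w z i j
  · have ih := runNE_stop (i + 1) (j + 1)
    rw [runNE, dif_pos h]
    convert ih using 2 <;> omega
  · rw [runNE, dif_neg h]; simpa using h
termination_by w.n - i
decreasing_by have := h.1; omega

lemma runSE_stop (i j : ℕ) : ¬ SE w z (i + runSE w z i j) (j - runSE w z i j) := by
  by_cases h : SE w z i j
  · have ih := runSE_stop (i + 1) (j - 1)
    rw [runSE, dif_pos h]
    have h1 := h.2.1
    convert ih using 2 <;> omega
  · rw [runSE, dif_neg h]; simpa using h
termination_by w.n - i
decreasing_by have := h.1; omega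

lemma runSW_stop (i j : ℕ) : ¬ SW w z (i - runSW w z i j) (j - runSW w z i j) := by
  by_cases h : SW w z i j
  · have ih := runSW_stop (i - 1) (j - 1)
    rw [runSW, dif_pos h]
    have h1 := h.1
    have h2 := h.2.1
    convert ih using 2 <;> omega
  · rw [runSW, dif_neg h]; simpa using h
termination_by i
decreasing_by have := h.1; omega

lemma runNW_stop (i j : ℕ) : ¬ NW w z (i - runNW w z i j) (j + runNW w z i j) := by
  by_cases h : NW w z i j
  · have ih := runNW_stop (i - 1) (j + 1)
    rw [runNW, dif_pos h]
    have h1 := h.1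
    convert ih using 2 <;> omega
  · rw [runNW, dif_neg h]; simpa using h
termination_by i
decreasing_by have := h.1; omega

lemma runNE_eq {i j : ℕ} (t : ℕ) (hchain : ∀ p < t, NE w z (i + p) (j + p))
    (hstop : ¬ NE w z (i + t) (j + t)) : runNE w z i j = t := by
  rcases Nat.lt_trichotomy (runNE w z i j) t with h | h | h
  · exact absurd (hchain _ h) (runNE_stop i j)
  · exact h
  · exact absurd (runNE_chain i j t h) hstop

lemma runSE_eq {i j : ℕ} (t : ℕ) (hchain : ∀ p < t, SE w z (i + p) (j - p))
    (hstop : ¬ SE w z (i + t) (j - t)) : runSE w z i j = t := by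
  rcases Nat.lt_trichotomy (runSE w z i j) t with h | h | h
  · exact absurd (hchain _ h) (runSE_stop i j)
  · exact h
  · exact absurd (runSE_chain i j t h) hstop

lemma runSW_eq {i j : ℕ} (t : ℕ) (hchain : ∀ p < t, SW w z (i - p) (j - p))
    (hstop : ¬ SW w z (i - t) (j - t)) : runSW w z i j = t := by
  rcases Nat.lt_trichotomy (runSW w z i j) t with h | h | h
  · exact absurd (hchain _ h) (runSW_stop i j)
  · exact h
  · exact absurd (runSW_chain i j t h) hstop

lemma runNW_eq {i j : ℕ} (t : ℕ) (hchain : ∀ p < t, NW w z (i - p) (j + p))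
    (hstop : ¬ NW w z (i - t) (j + t)) : runNW w z i j = t := by
  rcases Nat.lt_trichotomy (runNW w z i j) t with h | h | h
  · exact absurd (hchain _ h) (runNW_stop i j)
  · exact h
  · exact absurd (runNW_chain i j t h) hstop

section Excl

variable (hwred : ∀ i, i + 1 < w.n → w.a (i + 1) ≠ Q.linv (w.a i))
  (hzred : ∀ i, i + 1 < z.n → z.a (i + 1) ≠ Q.linv (z.a i))

include hwred hzred

lemma not_NE_SE {i j : ℕ} (h1 : NE w z i j) (h2 : SE w z i j) : False := by
  obtain ⟨-, hj1, hm1⟩ := h1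
  obtain ⟨-, hj2, hm2⟩ := h2
  exact hzred (j - 1) (by omega)
    (by rw [show j - 1 + 1 = j by omega, ← hm1]; exact hm2)

lemma not_NE_NW {i j : ℕ} (h1 : NE w z i j) (h2 : NW w z i j) : False := by
  obtain ⟨hi1, -, hm1⟩ := h1
  obtain ⟨hi2, -, hm2⟩ := h2
  exact hwred (i - 1) (by omega)
    (by rw [show i - 1 + 1 = i by omega, hm1, hm2, linv_linv])

lemma not_SE_SW {i j : ℕ} (h1 : SE w z i j) (h2 : SW w z i j) : False := by
  obtain ⟨hi1, -, hm1⟩ := h1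
  obtain ⟨hi2, -, hm2⟩ := h2
  exact hwred (i - 1) (by omega) (by rw [show i - 1 + 1 = i by omega, hm1, hm2])

lemma not_SW_NW {i j : ℕ} (h1 : SW w z i j) (h2 : NW w z i j) : False := by
  obtain ⟨-, hj1, hm1⟩ := h1
  obtain ⟨-, hj2, hm2⟩ := h2
  exact hzred (j - 1) (by omega)
    (by rw [show j - 1 + 1 = j by omega, ← hm1, hm2, linv_linv])

lemma NE_not_SE' {i j : ℕ} (h1 : NE w z i j) (h2 : SE w z (i + 1) (j + 1)) : False := by
  obtain ⟨-, -, hm1⟩ := h1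
  obtain ⟨hi2, -, hm2⟩ := h2
  exact hwred i hi2 (by rw [hm2, show j + 1 - 1 = j from rfl, ← hm1])

lemma NE_not_NW' {i j : ℕ} (h1 : NE w z i j) (h2 : NW w z (i + 1) (j + 1)) : False := by
  obtain ⟨-, -, hm1⟩ := h1
  obtain ⟨-, hj2, hm2⟩ := h2
  rw [show i + 1 - 1 = i from rfl] at hm2
  exact hzred j hj2 (by rw [← hm1, hm2, linv_linv])

lemma SE_not_NE' {i j : ℕ} (h1 : SE w z i j) (h2 : NE w z (i + 1) (j - 1)) : False := by
  obtain ⟨-, -, hm1⟩ := h1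
  obtain ⟨hi2, -, hm2⟩ := h2
  exact hwred i hi2 (by rw [hm2, hm1, linv_linv])

lemma SE_not_SW' {i j : ℕ} (hjz : j ≤ z.n) (h1 : SE w z i j) (h2 : SW w z (i + 1) (j - 1)) :
    False := by
  obtain ⟨-, hj1, hm1⟩ := h1
  obtain ⟨-, hj2, hm2⟩ := h2
  rw [show i + 1 - 1 = i from rfl] at hm2
  exact hzred (j - 1 - 1) (by omega)
    (by rw [show j - 1 - 1 + 1 = j - 1 by omega, ← hm2, hm1, linv_linv])

omit hwred hzred in
lemma SW_shift {i j : ℕ} (hi : i + 1 ≤ w.n) (hj : j + 1 ≤ z.n) :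
    SW w z (i + 1) (j + 1) ↔ NE w z i j := by
  unfold SW NE
  constructor
  · rintro ⟨-, -, hm⟩
    exact ⟨by omega, by omega, by simpa using hm⟩
  · rintro ⟨-, -, hm⟩
    exact ⟨by omega, by omega, by simpa using hm⟩

omit hwred hzred in
lemma NW_shift {i j : ℕ} (hi : i + 1 ≤ w.n) (hj1 : 1 ≤ j) (hj : j ≤ z.n) :
    NW w z (i + 1) (j - 1) ↔ SE w z i j := by
  unfold NW SE
  constructor
  · rintro ⟨-, -, hm⟩
    exact ⟨by omega, by omega, by simpa using hm⟩
  · rintro ⟨-, -, hm⟩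
    exact ⟨by omega, by omega, by simpa using hm⟩

end Excl

end Runs

section Chains

variable {F : Matrix (Fin (z.n + 1)) (Fin (w.n + 1)) k} (hF : F ∈ homModule k w z)
  (hwred : ∀ i, i + 1 < w.n → w.a (i + 1) ≠ Q.linv (w.a i))
  (hzred : ∀ i, i + 1 < z.n → z.a (i + 1) ≠ Q.linv (z.a i))

include hF hwred hzred

lemma const_chainNE (i j t : ℕ) (h : ∀ q < t, NE w z (i + q) (j + q)) :
    ext k F (j + t) (i + t) = ext k F j i := by
  induction t with
  | zero => rfl
  | succ q ih =>
    have hq := h q (by omega)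
    have hs := step_NE k hF hwred hzred hq.1 hq.2.1 hq.2.2
    rw [show j + (q + 1) = (j + q) + 1 by omega, show i + (q + 1) = (i + q) + 1 by omega,
      hs, ih (fun r hr => h r (by omega))]

lemma const_chainSE (i j t : ℕ) (hjz : j ≤ z.n) (h : ∀ q < t, SE w z (i + q) (j - q)) :
    ext k F (j - t) (i + t) = ext k F j i := by
  induction t with
  | zero => rfl
  | succ q ih =>
    have hq := h q (by omega)
    have hs := step_SE k hF hwred hzred hq.1 hq.2.1 (show j - q ≤ z.n by omega) hq.2.2
    rw [show j - (q + 1) = (j - q) - 1 by omega, show i + (q + 1) = (i + q) + 1 by omega,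
      hs, ih (fun r hr => h r (by omega))]

end Chains

section Profile

variable (hwred : ∀ i, i + 1 < w.n → w.a (i + 1) ≠ Q.linv (w.a i))
  (hzred : ∀ i, i + 1 < z.n → z.a (i + 1) ≠ Q.linv (z.a i))

include hwred hzred

/-- The run profile of a point in the support of an admissible pair with `rev = false`. -/
lemma sp_runs_false (P : AdmPair Q w z) (hrev : P.rev = false) {i j : ℕ} (h : sp P i j) :
    runSW w z i j = i - P.i₁ ∧ runNE w z i j = P.i₁ + P.d - i ∧
    runNW w z i j = 0 ∧ runSE w z i j = 0 := by
  obtain ⟨h1, h2, h3⟩ := h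
  rw [sig, hrev] at h3
  simp only [Bool.false_eq_true, if_false] at h3
  have hwn := P.hw
  have hzn := P.hz
  obtain ⟨hv, ha⟩ : (∀ p ≤ P.d, w.v (P.i₁ + p) = z.v (P.i₂ + p)) ∧
      ∀ p < P.d, w.a (P.i₁ + p) = z.a (P.i₂ + p) := by
    have := P.match_; rwa [hrev, if_neg (by simp)] at this
  have hNEc : ∀ p, i + p < P.i₁ + P.d → NE w z (i + p) (j + p) := by
    intro p hp
    refine ⟨by omega, by omega, ?_⟩
    have := ha (i - P.i₁ + p) (by omega)
    rw [show P.i₁ + (i - P.i₁ + p) = i + p by omega] at this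
    rw [this]
    congr 1
    omega
  have hSWc : ∀ p, p < i - P.i₁ → SW w z (i - p) (j - p) := by
    intro p hp
    refine ⟨by omega, by omega, ?_⟩
    have := ha (i - P.i₁ - p - 1) (by omega)
    rw [show P.i₁ + (i - P.i₁ - p - 1) = i - p - 1 by omega] at this
    rw [this]
    congr 1
    omega
  have hNEstop : ¬ NE w z (P.i₁ + P.d) (P.i₂ + P.d) := by
    rintro ⟨b1, b2, bm⟩
    rcases P.factorRight with h0 | ⟨e, he⟩
    · omega
    · rcases P.subRight with h0' | ⟨e', he'⟩
      · omega
      · rw [he, he'] at bm; exact absurd bm (by simp)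
  have hSWstop : ¬ SW w z P.i₁ P.i₂ := by
    rintro ⟨b1, b2, bm⟩
    rcases P.factorLeft with h0 | ⟨e, he⟩
    · omega
    · rcases P.subLeft with h0' | ⟨e', he'⟩
      · omega
      · rw [he, he'] at bm; exact absurd bm (by simp)
  have hNE : runNE w z i j = P.i₁ + P.d - i := by
    apply runNE_eq
    · intro p hp; exact hNEc p (by omega)
    · rw [show i + (P.i₁ + P.d - i) = P.i₁ + P.d by omega,
        show j + (P.i₁ + P.d - i) = P.i₂ + P.d by omega]
      exact hNEstop
  have hSW : runSW w z i j = i - P.i₁ := by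
    apply runSW_eq
    · exact hSWc
    · rw [show i - (i - P.i₁) = P.i₁ by omega, show j - (i - P.i₁) = P.i₂ by omega]
      exact hSWstop
  refine ⟨hSW, hNE, ?_, ?_⟩
  · apply runNW_eq 0
    · intro p hp; omega
    · simp only [Nat.sub_zero, Nat.add_zero]
      by_cases hc1 : i < P.i₁ + P.d
      · intro hNW
        exact not_NE_NW hwred hzred (by simpa using hNEc 0 (by omega)) hNW
      · by_cases hc2 : P.i₁ < i
        · intro hNW
          exact not_SW_NW hwred hzred (by simpa using hSWc 0 (by omega)) hNW
        · rintro ⟨b1, b2, bm⟩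
          rcases P.factorLeft with h0 | ⟨e, he⟩
          · omega
          · rcases P.subRight with h0' | ⟨e', he'⟩
            · omega
            · rw [show i - 1 = P.i₁ - 1 by omega, he, show j = P.i₂ + P.d by omega, he'] at bm
              exact absurd bm (by simp [QuiverData.linv])
  · apply runSE_eq 0
    · intro p hp; omega
    · simp only [Nat.sub_zero, Nat.add_zero]
      by_cases hc1 : i < P.i₁ + P.d
      · intro hSE
        exact not_NE_SE hwred hzred (by simpa using hNEc 0 (by omega)) hSE
      · by_cases hc2 : P.i₁ < i
        · intro hSE
          exact not_SE_SW hwred hzred hSE (by simpa using hSWc 0 (by omega))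
        · rintro ⟨b1, b2, bm⟩
          rcases P.factorRight with h0 | ⟨e, he⟩
          · omega
          · rcases P.subLeft with h0' | ⟨e', he'⟩
            · omega
            · rw [show i = P.i₁ + P.d by omega, he, show j - 1 = P.i₂ - 1 by omega, he'] at bm
              exact absurd bm (by simp [QuiverData.linv])

/-- The run profile of a point in the support of an admissible pair with `rev = true`. -/
lemma sp_runs_true (P : AdmPair Q w z) (hrev : P.rev = true) {i j : ℕ} (h : sp P i j) :
    runNW w z i j = i - P.i₁ ∧ runSE w z i j = P.i₁ + P.d - i ∧
    runSW w z i j = 0 ∧ runNE w z i j = 0 := by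
  obtain ⟨h1, h2, h3⟩ := h
  rw [sig, hrev] at h3
  simp only [if_true] at h3
  have hwn := P.hw
  have hzn := P.hz
  have hd0 : P.d ≠ 0 := fun h0 => by
    have := P.nodup h0; rw [hrev] at this; exact absurd this (by simp)
  obtain ⟨hv, ha⟩ : (∀ p ≤ P.d, w.v (P.i₁ + p) = z.v (P.i₂ + P.d - p)) ∧
      ∀ p < P.d, w.a (P.i₁ + p) = Q.linv (z.a (P.i₂ + P.d - 1 - p)) := by
    have := P.match_; rwa [hrev, if_pos rfl] at this
  have hSEc : ∀ p, i + p < P.i₁ + P.d → SE w z (i + p) (j - p) := by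
    intro p hp
    refine ⟨by omega, by omega, ?_⟩
    have := ha (i - P.i₁ + p) (by omega)
    rw [show P.i₁ + (i - P.i₁ + p) = i + p by omega] at this
    rw [this]
    congr 2
    omega
  have hNWc : ∀ p, p < i - P.i₁ → NW w z (i - p) (j + p) := by
    intro p hp
    refine ⟨by omega, by omega, ?_⟩
    have := ha (i - P.i₁ - p - 1) (by omega)
    rw [show P.i₁ + (i - P.i₁ - p - 1) = i - p - 1 by omega] at this
    rw [this]
    congr 2
    omega
  have hSEstop : ¬ SE w z (P.i₁ + P.d) P.i₂ := by
    rintro ⟨b1, b2, bm⟩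
    rcases P.factorRight with h0 | ⟨e, he⟩
    · omega
    · rcases P.subLeft with h0' | ⟨e', he'⟩
      · omega
      · rw [he, he'] at bm; exact absurd bm (by simp [QuiverData.linv])
  have hNWstop : ¬ NW w z P.i₁ (P.i₂ + P.d) := by
    rintro ⟨b1, b2, bm⟩
    rcases P.factorLeft with h0 | ⟨e, he⟩
    · omega
    · rcases P.subRight with h0' | ⟨e', he'⟩
      · omega
      · rw [he, he'] at bm; exact absurd bm (by simp [QuiverData.linv])
  have hSE : runSE w z i j = P.i₁ + P.d - i := by
    apply runSE_eq
    · intro p hp; exact hSEc p (by omega)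
    · rw [show i + (P.i₁ + P.d - i) = P.i₁ + P.d by omega,
        show j - (P.i₁ + P.d - i) = P.i₂ by omega]
      exact hSEstop
  have hNW : runNW w z i j = i - P.i₁ := by
    apply runNW_eq
    · exact hNWc
    · rw [show i - (i - P.i₁) = P.i₁ by omega, show j + (i - P.i₁) = P.i₂ + P.d by omega]
      exact hNWstop
  refine ⟨hNW, hSE, ?_, ?_⟩
  · apply runSW_eq 0
    · intro p hp; omega
    · simp only [Nat.sub_zero]
      by_cases hc1 : i < P.i₁ + P.d
      · intro hSW
        exact not_SE_SW hwred hzred (by simpa using hSEc 0 (by omega)) hSW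
      · intro hSW
        exact not_SW_NW hwred hzred hSW (by simpa using hNWc 0 (by omega))
  · apply runNE_eq 0
    · intro p hp; omega
    · simp only [Nat.add_zero]
      by_cases hc1 : i < P.i₁ + P.d
      · intro hNE
        exact not_NE_SE hwred hzred hNE (by simpa using hSEc 0 (by omega))
      · intro hNE
        exact not_NE_NW hwred hzred hNE (by simpa using hNWc 0 (by omega))

omit hwred hzred in
lemma admPair_ext {P P' : AdmPair Q w z} (h1 : P.i₁ = P'.i₁) (h2 : P.i₂ = P'.i₂)
    (h3 : P.d = P'.d) (h4 : P.rev = P'.rev) : P = P' := by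
  cases P; cases P'
  dsimp at h1 h2 h3 h4
  subst h1; subst h2; subst h3; subst h4
  rfl

/-- Distinct admissible pairs have disjoint supports. -/
lemma sp_unique (P P' : AdmPair Q w z) {i j : ℕ} (h : sp P i j) (h' : sp P' i j) :
    P = P' := by
  have hb := h
  have hb' := h'
  obtain ⟨a1, a2, a3⟩ := hb
  obtain ⟨b1, b2, b3⟩ := hb'
  rcases hr : P.rev with _ | _ <;> rcases hr' : P'.rev with _ | _
  · obtain ⟨c1, c2, -, -⟩ := sp_runs_false hwred hzred P hr h
    obtain ⟨d1, d2, -, -⟩ := sp_runs_false hwred hzred P' hr' h'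
    rw [sig, hr] at a3
    rw [sig, hr'] at b3
    simp only [Bool.false_eq_true, if_false] at a3 b3
    have e1 : P.i₁ = P'.i₁ := by omega
    have e2 : P.i₂ = P'.i₂ := by omega
    have e3 : P.d = P'.d := by omega
    exact admPair_ext e1 e2 e3 (by rw [hr, hr'])
  · obtain ⟨c1, c2, -, -⟩ := sp_runs_false hwred hzred P hr h
    obtain ⟨d1, d2, -, -⟩ := sp_runs_true hwred hzred P' hr' h'
    obtain ⟨-, -, -, e2⟩ := sp_runs_false hwred hzred P hr h
    obtain ⟨-, -, -, f2⟩ := sp_runs_true hwred hzred P' hr' h'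
    exfalso
    have hd0 : P'.d ≠ 0 := fun h0 => by
      have := P'.nodup h0; rw [hr'] at this; exact absurd this (by simp)
    obtain ⟨g1, g2, g3, g4⟩ := sp_runs_true hwred hzred P' hr' h'
    obtain ⟨k1, k2, k3, k4⟩ := sp_runs_false hwred hzred P hr h
    omega
  · exfalso
    have hd0 : P.d ≠ 0 := fun h0 => by
      have := P.nodup h0; rw [hr] at this; exact absurd this (by simp)
    obtain ⟨g1, g2, g3, g4⟩ := sp_runs_true hwred hzred P hr h
    obtain ⟨k1, k2, k3, k4⟩ := sp_runs_false hwred hzred P' hr' h'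
    omega
  · obtain ⟨c1, c2, -, -⟩ := sp_runs_true hwred hzred P hr h
    obtain ⟨d1, d2, -, -⟩ := sp_runs_true hwred hzred P' hr' h'
    rw [sig, hr] at a3
    rw [sig, hr'] at b3
    simp only [if_true] at a3 b3
    have e1 : P.i₁ = P'.i₁ := by omega
    have e2 : P.i₂ = P'.i₂ := by omega
    have e3 : P.d = P'.d := by omega
    exact admPair_ext e1 e2 e3 (by rw [hr, hr'])

end Profile

lemma lsrc_linv (x : Q.Letter) : Q.lsrc (Q.linv x) = Q.ltgt x := by cases x <;> rfl

lemma ltgt_linv (x : Q.Letter) : Q.ltgt (Q.linv x) = Q.lsrc x := by cases x <;> rfl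

lemma run_zero_NE {i j : ℕ} (h : runNE w z i j = 0) : ¬ NE w z i j :=
  fun hx => by rw [runNE, dif_pos hx] at h; omega

lemma run_zero_SE {i j : ℕ} (h : runSE w z i j = 0) : ¬ SE w z i j :=
  fun hx => by rw [runSE, dif_pos hx] at h; omega

lemma run_zero_SW {i j : ℕ} (h : runSW w z i j = 0) : ¬ SW w z i j :=
  fun hx => by rw [runSW, dif_pos hx] at h; omega

lemma run_zero_NW {i j : ℕ} (h : runNW w z i j = 0) : ¬ NW w z i j :=
  fun hx => by rw [runNW, dif_pos hx] at h; omega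

section Exists

variable {F : Matrix (Fin (z.n + 1)) (Fin (w.n + 1)) k} (hF : F ∈ homModule k w z)
  (hwred : ∀ i, i + 1 < w.n → w.a (i + 1) ≠ Q.linv (w.a i))
  (hzred : ∀ i, i + 1 < z.n → z.a (i + 1) ≠ Q.linv (z.a i))
  (hwv : ∀ i < w.n, Q.lsrc (w.a i) = w.v i ∧ Q.ltgt (w.a i) = w.v (i + 1))
  (hzv : ∀ i < z.n, Q.lsrc (z.a i) = z.v i ∧ Q.ltgt (z.a i) = z.v (i + 1))

include hF hwred hzred hwv hzv

/-- The maximal matching segment through a point supporting a nonzero entry of a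
homomorphism is admissible, and the homomorphism is constant on it. -/
lemma exists_pair {i₀ j₀ : ℕ} (hi₀ : i₀ ≤ w.n) (hj₀ : j₀ ≤ z.n)
    (hne : ext k F j₀ i₀ ≠ 0) :
    ∃ P : AdmPair Q w z, sp P i₀ j₀ ∧
      ∀ i j : ℕ, sp P i j → ext k F j i = ext k F j₀ i₀ := by
  have bSW := runSW_le (w := w) (z := z) i₀ j₀
  have bNE := runNE_le (w := w) (z := z) i₀ j₀ hi₀ hj₀
  have bSE := runSE_le (w := w) (z := z) i₀ j₀ hi₀
  have bNW := runNW_le (w := w) (z := z) i₀ j₀ hj₀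
  have hSWstop := runSW_stop (w := w) (z := z) i₀ j₀
  have hNEstop := runNE_stop (w := w) (z := z) i₀ j₀
  have hSEstop := runSE_stop (w := w) (z := z) i₀ j₀
  have hNWstop := runNW_stop (w := w) (z := z) i₀ j₀
  set rsw := runSW w z i₀ j₀ with hsw
  set rne := runNE w z i₀ j₀ with hne'
  set rnw := runNW w z i₀ j₀ with hnw
  set rse := runSE w z i₀ j₀ with hse
  clear_value rsw rne rnw rse
  by_cases htype : rnw = 0 ∧ rse = 0
  · -- rev = false
    have hchain : ∀ q < rsw + rne, NE w z (i₀ - rsw + q) (j₀ - rsw + q) := by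
      intro q hq
      by_cases hq' : q < rsw
      · have hc := runSW_chain (w := w) (z := z) i₀ j₀ (rsw - q - 1) (by omega)
        rw [show i₀ - (rsw - q - 1) = (i₀ - rsw + q) + 1 by omega,
          show j₀ - (rsw - q - 1) = (j₀ - rsw + q) + 1 by omega] at hc
        exact (SW_shift (by omega) (by omega)).mp hc
      · have hc := runNE_chain (w := w) (z := z) i₀ j₀ (q - rsw) (by omega)
        rw [show i₀ + (q - rsw) = i₀ - rsw + q by omega,
          show j₀ + (q - rsw) = j₀ - rsw + q by omega] at hc
        exact hc
    have hconst : ∀ p ≤ rsw + rne,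
        ext k F (j₀ - rsw + p) (i₀ - rsw + p) = ext k F (j₀ - rsw) (i₀ - rsw) :=
      fun p hp => const_chainNE k hF hwred hzred _ _ p (fun q hq => hchain q (by omega))
    have hbase : ext k F (j₀ - rsw) (i₀ - rsw) = ext k F j₀ i₀ := by
      have h1 := hconst rsw (by omega)
      rw [show j₀ - rsw + rsw = j₀ by omega, show i₀ - rsw + rsw = i₀ by omega] at h1
      exact h1.symm
    have hnbase : ext k F (j₀ - rsw) (i₀ - rsw) ≠ 0 := by rw [hbase]; exact hne
    have hnSE_E : ¬ SE w z (i₀ + rne) (j₀ + rne) := by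
      by_cases hne0 : rne = 0
      · rw [hne0]
        simpa using run_zero_SE (hse.symm.trans htype.2)
      · intro hSE
        have hlast := runNE_chain (w := w) (z := z) i₀ j₀ (rne - 1) (by omega)
        apply NE_not_SE' hwred hzred hlast
        rw [show i₀ + (rne - 1) + 1 = i₀ + rne by omega,
          show j₀ + (rne - 1) + 1 = j₀ + rne by omega]
        exact hSE
    have hnNW_E : ¬ NW w z (i₀ + rne) (j₀ + rne) := by
      by_cases hne0 : rne = 0
      · rw [hne0]
        simpa using run_zero_NW (hnw.symm.trans htype.1)
      · intro hNW
        have hlast := runNE_chain (w := w) (z := z) i₀ j₀ (rne - 1) (by omega)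
        apply NE_not_NW' hwred hzred hlast
        rw [show i₀ + (rne - 1) + 1 = i₀ + rne by omega,
          show j₀ + (rne - 1) + 1 = j₀ + rne by omega]
        exact hNW
    have hnNW_W : ¬ NW w z (i₀ - rsw) (j₀ - rsw) := by
      by_cases hsw0 : rsw = 0
      · rw [hsw0]
        simpa using run_zero_NW (hnw.symm.trans htype.1)
      · intro hNW
        exact not_NE_NW hwred hzred (by simpa using hchain 0 (by omega)) hNW
    have hnSE_W : ¬ SE w z (i₀ - rsw) (j₀ - rsw) := by
      by_cases hd0 : rsw + rne = 0
      · have : rsw = 0 := by omega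
        rw [this]
        simpa using run_zero_SE (hse.symm.trans htype.2)
      · intro hSE
        exact not_NE_SE hwred hzred (by simpa using hchain 0 (by omega)) hSE
    refine ⟨⟨i₀ - rsw, j₀ - rsw, rsw + rne, false, by omega, by omega, ?_, ?_, ?_, ?_, ?_,
      fun _ => rfl⟩, ?_, ?_⟩
    · -- factorLeft
      by_cases h0 : i₀ - rsw = 0
      · exact Or.inl h0
      · rcases hL : w.a (i₀ - rsw - 1) with e | e
        · exfalso
          apply hnbase
          apply van_W k hF hwred hzred (by omega) (by omega) (by omega) hL
          · rintro ⟨u1, u2⟩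
            exact hnNW_W ⟨by omega, u1, by rw [hL, u2]; rfl⟩
          · rintro ⟨u1, u2⟩
            exact hSWstop ⟨by omega, u1, by rw [hL, u2]⟩
        · exact Or.inr ⟨e, rfl⟩
    · -- factorRight
      by_cases h0 : i₀ - rsw + (rsw + rne) = w.n
      · exact Or.inl h0
      · rcases hL : w.a (i₀ - rsw + (rsw + rne)) with e | e
        · exact Or.inr ⟨e, rfl⟩
        · exfalso
          rw [show i₀ - rsw + (rsw + rne) = i₀ + rne by omega] at hL
          have hval : ext k F (j₀ + rne) (i₀ + rne) ≠ 0 := by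
            have h1 := hconst (rsw + rne) (le_refl _)
            rw [show j₀ - rsw + (rsw + rne) = j₀ + rne by omega,
              show i₀ - rsw + (rsw + rne) = i₀ + rne by omega] at h1
            rw [h1]; exact hnbase
          apply hval
          apply van_E k hF hwred hzred (by omega) (by omega) hL
          · rintro ⟨u1, u2⟩
            exact hnSE_E ⟨by omega, u1, by rw [hL, u2]; rfl⟩
          · rintro ⟨u1, u2⟩
            exact hNEstop ⟨by omega, u1, by rw [hL, u2]⟩
    · -- subLeft
      by_cases h0 : j₀ - rsw = 0
      · exact Or.inl h0
      · rcases hL : z.a (j₀ - rsw - 1) with e | e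
        · exact Or.inr ⟨e, rfl⟩
        · exfalso
          apply hnbase
          apply van_S k hF hwred hzred (by omega) (by omega) (by omega) hL
          · rintro ⟨u1, u2⟩
            exact hnSE_W ⟨u1, by omega, by rw [u2, hL]; rfl⟩
          · rintro ⟨u1, u2⟩
            exact hSWstop ⟨u1, by omega, by rw [u2, hL]⟩
    · -- subRight
      by_cases h0 : j₀ - rsw + (rsw + rne) = z.n
      · exact Or.inl h0
      · rcases hL : z.a (j₀ - rsw + (rsw + rne)) with e | e
        · exfalso
          rw [show j₀ - rsw + (rsw + rne) = j₀ + rne by omega] at hL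
          have hval : ext k F (j₀ + rne) (i₀ + rne) ≠ 0 := by
            have h1 := hconst (rsw + rne) (le_refl _)
            rw [show j₀ - rsw + (rsw + rne) = j₀ + rne by omega,
              show i₀ - rsw + (rsw + rne) = i₀ + rne by omega] at h1
            rw [h1]; exact hnbase
          apply hval
          apply van_N k hF hwred hzred (by omega) (by omega) hL
          · rintro ⟨u1, u2⟩
            exact hNEstop ⟨u1, by omega, by rw [u2, hL]⟩
          · rintro ⟨u1, u2⟩
            exact hnNW_E ⟨u1, by omega, by rw [u2, hL]; rfl⟩
        · exact Or.inr ⟨e, rfl⟩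
    · -- match_
      have ha' : ∀ p < rsw + rne, w.a (i₀ - rsw + p) = z.a (j₀ - rsw + p) :=
        fun p hp => (hchain p hp).2.2
      have hv' : ∀ p ≤ rsw + rne, w.v (i₀ - rsw + p) = z.v (j₀ - rsw + p) := by
        intro p hp
        by_cases hp' : p < rsw + rne
        · obtain ⟨u1, u2, u3⟩ := hchain p hp'
          rw [← (hwv _ u1).1, ← (hzv _ u2).1, u3]
        · by_cases hd0 : rsw + rne = 0
          · have hp0 : p = 0 := by omega
            have hsw0 : rsw = 0 := by omega
            rw [hp0, hsw0]
            simpa using vertex_match k hF hi₀ hj₀ hne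
          · have hq : p - 1 < rsw + rne := by omega
            obtain ⟨u1, u2, u3⟩ := hchain (p - 1) hq
            rw [show i₀ - rsw + p = (i₀ - rsw + (p - 1)) + 1 by omega,
              show j₀ - rsw + p = (j₀ - rsw + (p - 1)) + 1 by omega,
              ← (hwv _ u1).2, ← (hzv _ u2).2, u3]
      exact ⟨hv', ha'⟩
    · -- sp P i₀ j₀
      refine ⟨by dsimp only; omega, by dsimp only; omega, ?_⟩
      dsimp only [sig]
      simp only [Bool.false_eq_true, if_false]
      omega
    · -- constancy
      rintro i j ⟨u1, u2, u3⟩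
      dsimp only at u1 u2
      dsimp only [sig] at u3
      simp only [Bool.false_eq_true, if_false] at u3
      have h1 := hconst (i - (i₀ - rsw)) (by omega)
      rw [show j₀ - rsw + (i - (i₀ - rsw)) = j by omega,
        show i₀ - rsw + (i - (i₀ - rsw)) = i by omega] at h1
      rw [h1, hbase]
  · -- rev = true
    have hcent : rsw = 0 ∧ rne = 0 := by
      rcases Nat.eq_zero_or_pos rnw with h0 | hpos
      · rcases Nat.eq_zero_or_pos rse with h0' | hpos'
        · exact absurd ⟨h0, h0'⟩ htype
        · have hSE0 : SE w z i₀ j₀ := runSE_pos (by omega)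
          constructor
          · by_contra hs
            exact not_SE_SW hwred hzred hSE0 (runSW_pos (by omega))
          · by_contra hs
            exact not_NE_SE hwred hzred (runNE_pos (by omega)) hSE0
      · have hNW0 : NW w z i₀ j₀ := runNW_pos (by omega)
        constructor
        · by_contra hs
          exact not_SW_NW hwred hzred (runSW_pos (by omega)) hNW0
        · by_contra hs
          exact not_NE_NW hwred hzred (runNE_pos (by omega)) hNW0
    have hdpos : 0 < rnw + rse := by
      rcases Nat.eq_zero_or_pos rnw with h0 | hpos
      · rcases Nat.eq_zero_or_pos rse with h0' | hpos'
        · exact absurd ⟨h0, h0'⟩ htype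
        · omega
      · omega
    have hchain : ∀ q < rnw + rse, SE w z (i₀ - rnw + q) (j₀ + rnw - q) := by
      intro q hq
      by_cases hq' : q < rnw
      · have hc := runNW_chain (w := w) (z := z) i₀ j₀ (rnw - q - 1) (by omega)
        rw [show i₀ - (rnw - q - 1) = (i₀ - rnw + q) + 1 by omega,
          show j₀ + (rnw - q - 1) = (j₀ + rnw - q) - 1 by omega] at hc
        exact (NW_shift (by omega) (by omega) (by omega)).mp hc
      · have hc := runSE_chain (w := w) (z := z) i₀ j₀ (q - rnw) (by omega)
        rw [show i₀ + (q - rnw) = i₀ - rnw + q by omega,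
          show j₀ - (q - rnw) = j₀ + rnw - q by omega] at hc
        exact hc
    have hconst : ∀ p ≤ rnw + rse,
        ext k F (j₀ + rnw - p) (i₀ - rnw + p) = ext k F (j₀ + rnw) (i₀ - rnw) :=
      fun p hp => const_chainSE k hF hwred hzred _ _ p (by omega)
        (fun q hq => hchain q (by omega))
    have hbase : ext k F (j₀ + rnw) (i₀ - rnw) = ext k F j₀ i₀ := by
      have h1 := hconst rnw (by omega)
      rw [show j₀ + rnw - rnw = j₀ by omega, show i₀ - rnw + rnw = i₀ by omega] at h1
      exact h1.symm
    have hnbase : ext k F (j₀ + rnw) (i₀ - rnw) ≠ 0 := by rw [hbase]; exact hne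
    have hvalE : ext k F (j₀ - rse) (i₀ + rse) ≠ 0 := by
      have h1 := hconst (rnw + rse) (le_refl _)
      rw [show j₀ + rnw - (rnw + rse) = j₀ - rse by omega,
        show i₀ - rnw + (rnw + rse) = i₀ + rse by omega] at h1
      rw [h1]; exact hnbase
    have hnNE_E : ¬ NE w z (i₀ + rse) (j₀ - rse) := by
      by_cases hse0 : rse = 0
      · rw [hse0]
        simpa using run_zero_NE (hne'.symm.trans hcent.2)
      · intro hNE
        have hlast := runSE_chain (w := w) (z := z) i₀ j₀ (rse - 1) (by omega)
        apply SE_not_NE' hwred hzred hlast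
        rw [show i₀ + (rse - 1) + 1 = i₀ + rse by omega,
          show j₀ - (rse - 1) - 1 = j₀ - rse by omega]
        exact hNE
    have hnSW_E : ¬ SW w z (i₀ + rse) (j₀ - rse) := by
      by_cases hse0 : rse = 0
      · rw [hse0]
        simpa using run_zero_SW (hsw.symm.trans hcent.1)
      · intro hSW
        have hlast := runSE_chain (w := w) (z := z) i₀ j₀ (rse - 1) (by omega)
        apply SE_not_SW' hwred hzred (by omega) hlast
        rw [show i₀ + (rse - 1) + 1 = i₀ + rse by omega,
          show j₀ - (rse - 1) - 1 = j₀ - rse by omega]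
        exact hSW
    have hnNE_W : ¬ NE w z (i₀ - rnw) (j₀ + rnw) := by
      by_cases hnw0 : rnw = 0
      · rw [hnw0]
        simpa using run_zero_NE (hne'.symm.trans hcent.2)
      · intro hNE
        exact not_NE_SE hwred hzred hNE (by simpa using hchain 0 (by omega))
    have hnSW_W : ¬ SW w z (i₀ - rnw) (j₀ + rnw) := by
      by_cases hnw0 : rnw = 0
      · rw [hnw0]
        simpa using run_zero_SW (hsw.symm.trans hcent.1)
      · intro hSW
        exact not_SE_SW hwred hzred (by simpa using hchain 0 (by omega)) hSW
    refine ⟨⟨i₀ - rnw, j₀ - rse, rnw + rse, true, by omega, by omega, ?_, ?_, ?_, ?_, ?_,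
      fun h0 => absurd h0 (by omega)⟩, ?_, ?_⟩
    · -- factorLeft
      by_cases h0 : i₀ - rnw = 0
      · exact Or.inl h0
      · rcases hL : w.a (i₀ - rnw - 1) with e | e
        · exfalso
          apply hnbase
          apply van_W k hF hwred hzred (by omega) (by omega) (by omega) hL
          · rintro ⟨u1, u2⟩
            exact hNWstop ⟨by omega, u1, by rw [hL, u2]; rfl⟩
          · rintro ⟨u1, u2⟩
            exact hnSW_W ⟨by omega, u1, by rw [hL, u2]⟩
        · exact Or.inr ⟨e, rfl⟩
    · -- factorRight
      by_cases h0 : i₀ - rnw + (rnw + rse) = w.n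
      · exact Or.inl h0
      · rcases hL : w.a (i₀ - rnw + (rnw + rse)) with e | e
        · exact Or.inr ⟨e, rfl⟩
        · exfalso
          rw [show i₀ - rnw + (rnw + rse) = i₀ + rse by omega] at hL
          apply hvalE
          apply van_E k hF hwred hzred (by omega) (by omega) hL
          · rintro ⟨u1, u2⟩
            exact hSEstop ⟨by omega, u1, by rw [hL, u2]; rfl⟩
          · rintro ⟨u1, u2⟩
            exact hnNE_E ⟨by omega, u1, by rw [hL, u2]⟩
    · -- subLeft
      by_cases h0 : j₀ - rse = 0
      · exact Or.inl h0
      · rcases hL : z.a (j₀ - rse - 1) with e | e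
        · exact Or.inr ⟨e, rfl⟩
        · exfalso
          apply hvalE
          apply van_S k hF hwred hzred (by omega) (by omega) (by omega) hL
          · rintro ⟨u1, u2⟩
            exact hSEstop ⟨u1, by omega, by rw [u2, hL]; rfl⟩
          · rintro ⟨u1, u2⟩
            exact hnSW_E ⟨u1, by omega, by rw [u2, hL]⟩
    · -- subRight
      by_cases h0 : j₀ - rse + (rnw + rse) = z.n
      · exact Or.inl h0
      · rcases hL : z.a (j₀ - rse + (rnw + rse)) with e | e
        · exfalso
          rw [show j₀ - rse + (rnw + rse) = j₀ + rnw by omega] at hL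
          apply hnbase
          apply van_N k hF hwred hzred (by omega) (by omega) hL
          · rintro ⟨u1, u2⟩
            exact hnNE_W ⟨u1, by omega, by rw [u2, hL]⟩
          · rintro ⟨u1, u2⟩
            exact hNWstop ⟨u1, by omega, by rw [u2, hL]; rfl⟩
        · exact Or.inr ⟨e, rfl⟩
    · -- match_
      have ha' : ∀ p < rnw + rse,
          w.a (i₀ - rnw + p) = Q.linv (z.a (j₀ - rse + (rnw + rse) - 1 - p)) := by
        intro p hp
        have hc := (hchain p hp).2.2
        rw [show j₀ + rnw - p - 1 = j₀ - rse + (rnw + rse) - 1 - p by omega] at hc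
        exact hc
      have hv' : ∀ p ≤ rnw + rse, w.v (i₀ - rnw + p) = z.v (j₀ - rse + (rnw + rse) - p) := by
        intro p hp
        by_cases hp' : p < rnw + rse
        · obtain ⟨u1, u2, u3⟩ := hchain p hp'
          have hidx : j₀ + rnw - p - 1 < z.n := by omega
          rw [← (hwv _ u1).1, u3, lsrc_linv, (hzv _ hidx).2,
            show j₀ + rnw - p - 1 + 1 = j₀ - rse + (rnw + rse) - p by omega]
        · have hq : p - 1 < rnw + rse := by omega
          obtain ⟨u1, u2, u3⟩ := hchain (p - 1) hq
          have hidx : j₀ + rnw - (p - 1) - 1 < z.n := by omega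
          rw [show i₀ - rnw + p = (i₀ - rnw + (p - 1)) + 1 by omega,
            ← (hwv _ u1).2, u3, ltgt_linv, (hzv _ hidx).1,
            show j₀ + rnw - (p - 1) - 1 = j₀ - rse + (rnw + rse) - p by omega]
      exact ⟨hv', ha'⟩
    · -- sp P i₀ j₀
      refine ⟨by dsimp only; omega, by dsimp only; omega, ?_⟩
      dsimp only [sig]
      simp only [if_true]
      omega
    · -- constancy
      rintro i j ⟨u1, u2, u3⟩
      dsimp only at u1 u2
      dsimp only [sig] at u3
      simp only [if_true] at u3
      have h1 := hconst (i - (i₀ - rnw)) (by omega)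
      rw [show j₀ + rnw - (i - (i₀ - rnw)) = j by omega,
        show i₀ - rnw + (i - (i₀ - rnw)) = i by omega] at h1
      rw [h1, hbase]

end Exists

open scoped Classical

lemma canonMat_apply (P : AdmPair Q w z) (jj : Fin (z.n + 1)) (ii : Fin (w.n + 1)) :
    canonMat k P jj ii = if sp P (ii : ℕ) (jj : ℕ) then 1 else 0 := by
  have h := ext_canonMat k P (jj : ℕ) (ii : ℕ)
  rw [ext_apply] at h
  rw [h]
  refine if_congr ?_ rfl rfl
  constructor
  · rintro ⟨-, -, hh⟩; exact hh
  · intro hh; exact ⟨by omega, by omega, hh⟩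

section Span

variable (hwred : ∀ i, i + 1 < w.n → w.a (i + 1) ≠ Q.linv (w.a i))
  (hzred : ∀ i, i + 1 < z.n → z.a (i + 1) ≠ Q.linv (z.a i))
  (hwv : ∀ i < w.n, Q.lsrc (w.a i) = w.v i ∧ Q.ltgt (w.a i) = w.v (i + 1))
  (hzv : ∀ i < z.n, Q.lsrc (z.a i) = z.v i ∧ Q.ltgt (z.a i) = z.v (i + 1))

include hwred hzred hwv hzv

lemma span_aux (N : ℕ) :
    ∀ F : Matrix (Fin (z.n + 1)) (Fin (w.n + 1)) k, F ∈ homModule k w z →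
      (Finset.univ.filter
        (fun p : Fin (z.n + 1) × Fin (w.n + 1) => F p.1 p.2 ≠ 0)).card ≤ N →
      F ∈ Submodule.span k (Set.range fun P : AdmPair Q w z => canonMat k P) := by
  induction N with
  | zero =>
    intro F hF hcard
    have hF0 : F = 0 := by
      ext jj ii
      by_contra hne
      have hmem : (jj, ii) ∈ Finset.univ.filter
          (fun p : Fin (z.n + 1) × Fin (w.n + 1) => F p.1 p.2 ≠ 0) := by
        simp only [Finset.mem_filter, Finset.mem_univ, true_and]
        exact hne
      have := Finset.card_pos.mpr ⟨_, hmem⟩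
      omega
    rw [hF0]
    exact Submodule.zero_mem _
  | succ N ih =>
    intro F hF hcard
    by_cases hF0 : F = 0
    · rw [hF0]; exact Submodule.zero_mem _
    · have hex : ∃ jj ii, F jj ii ≠ 0 := by
        by_contra hno
        push_neg at hno
        exact hF0 (by ext jj ii; simpa using hno jj ii)
      obtain ⟨jj, ii, hne0⟩ := hex
      have hne' : ext k F (jj : ℕ) (ii : ℕ) ≠ 0 := by rwa [ext_apply]
      obtain ⟨P, hsp₀, hconst⟩ := exists_pair k hF hwred hzred hwv hzv
        (by omega) (by omega) hne'
      set c := F jj ii with hc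
      set F' := F - c • canonMat k P with hF'def
      have hF' : F' ∈ homModule k w z :=
        Submodule.sub_mem _ hF (Submodule.smul_mem _ _ (canon_mem k P))
      have hzero : ∀ (j : Fin (z.n + 1)) (i : Fin (w.n + 1)),
          sp P (i : ℕ) (j : ℕ) → F' j i = 0 := by
        intro j i hsp
        have h1 : F j i = c := by
          have := hconst (i : ℕ) (j : ℕ) hsp
          rw [ext_apply, ext_apply] at this
          rw [this, hc]
        rw [hF'def]
        simp only [Matrix.sub_apply, Matrix.smul_apply, smul_eq_mul]
        rw [h1, canonMat_apply, if_pos hsp]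
        ring
      have hsame : ∀ (j : Fin (z.n + 1)) (i : Fin (w.n + 1)),
          ¬ sp P (i : ℕ) (j : ℕ) → F' j i = F j i := by
        intro j i hsp
        rw [hF'def]
        simp only [Matrix.sub_apply, Matrix.smul_apply, smul_eq_mul]
        rw [canonMat_apply, if_neg hsp]
        ring
      have hsub : (Finset.univ.filter
          (fun p : Fin (z.n + 1) × Fin (w.n + 1) => F' p.1 p.2 ≠ 0)) ⊆
          (Finset.univ.filter
          (fun p : Fin (z.n + 1) × Fin (w.n + 1) => F p.1 p.2 ≠ 0)).erase (jj, ii) := by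
        intro p hp
        simp only [Finset.mem_filter, Finset.mem_univ, true_and] at hp
        rw [Finset.mem_erase]
        constructor
        · rintro rfl
          exact hp (hzero jj ii hsp₀)
        · simp only [Finset.mem_filter, Finset.mem_univ, true_and]
          intro hzeroF
          by_cases hsp : sp P (p.2 : ℕ) (p.1 : ℕ)
          · exact hp (hzero p.1 p.2 hsp)
          · rw [hsame p.1 p.2 hsp] at hp
            exact hp hzeroF
      have hcard' : (Finset.univ.filter
          (fun p : Fin (z.n + 1) × Fin (w.n + 1) => F' p.1 p.2 ≠ 0)).card ≤ N := by
        have h1 := Finset.card_le_card hsub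
        have h2 : (jj, ii) ∈ Finset.univ.filter
            (fun p : Fin (z.n + 1) × Fin (w.n + 1) => F p.1 p.2 ≠ 0) := by
          simp only [Finset.mem_filter, Finset.mem_univ, true_and]
          exact hne0
        have h3 := Finset.card_erase_of_mem h2
        omega
      have hmem' := ih F' hF' hcard'
      have : F = F' + c • canonMat k P := by rw [hF'def]; abel
      rw [this]
      exact Submodule.add_mem _ hmem'
        (Submodule.smul_mem _ _ (Submodule.subset_span ⟨P, rfl⟩))

end Span

end CBProof

/-- Crawley-Boevey: for a string algebra `A = kQ/I` and strings `w`, `z`,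
the canonical homomorphisms `f_a` indexed by the admissible pairs in `F(w) × S(z)` form
a `k`-basis of `Hom_A(M(w), M(z))`. -/
theorem crawley_boevey_hom_basis
    (Q : QuiverData) [Fintype Q.V] [Fintype Q.E] [DecidableEq Q.E] [DecidableEq Q.V]
    (k : Type) [Field k]
    (Irel : List Q.E → Prop)
    (hIpath : ∀ ρ, Irel ρ → Q.IsPath ρ ∧ 2 ≤ ρ.length)
    (hadm : ∃ N, ∀ ρ : List Q.E, Q.IsPath ρ → N ≤ ρ.length → ∃ σ, σ <:+: ρ ∧ Irel σ)
    (hS1s : ∀ x : Q.V, ∀ e₁ e₂ e₃ : Q.E, Q.src e₁ = x → Q.src e₂ = x → Q.src e₃ = x →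
      e₁ = e₂ ∨ e₁ = e₃ ∨ e₂ = e₃)
    (hS1t : ∀ x : Q.V, ∀ e₁ e₂ e₃ : Q.E, Q.tgt e₁ = x → Q.tgt e₂ = x → Q.tgt e₃ = x →
      e₁ = e₂ ∨ e₁ = e₃ ∨ e₂ = e₃)
    (hS2l : ∀ α β β' : Q.E, Q.tgt α = Q.src β → Q.tgt α = Q.src β' →
      ¬ Irel [α, β] → ¬ Irel [α, β'] → β = β')
    (hS2r : ∀ α α' β : Q.E, Q.tgt α = Q.src β → Q.tgt α' = Q.src β →
      ¬ Irel [α, β] → ¬ Irel [α', β] → α = α')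
    (w z : Q.Walk) (hw : w.IsString Irel) (hz : z.IsString Irel) :
    (∀ P : AdmPair Q w z, canonMat k P ∈ homModule k w z) ∧
    LinearIndependent k (fun P : AdmPair Q w z => canonMat k P) ∧
    Submodule.span k (Set.range fun P : AdmPair Q w z => canonMat k P) =
      homModule k w z := by
  classical
  obtain ⟨hwv, hwred, -⟩ := hw
  obtain ⟨hzv, hzred, -⟩ := hz
  refine ⟨fun P => CBProof.canon_mem k P, ?_, ?_⟩
  · rw [linearIndependent_iff']
    intro s g hsum P hPs
    have hiw : P.i₁ < w.n + 1 := by have := P.hw; omega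
    have hjz : CBProof.sig P P.i₁ < z.n + 1 := by
      have := P.hz
      unfold CBProof.sig
      split <;> omega
    set ii : Fin (w.n + 1) := ⟨P.i₁, hiw⟩ with hii
    set jj : Fin (z.n + 1) := ⟨CBProof.sig P P.i₁, hjz⟩ with hjj
    have hsp : CBProof.sp P (ii : ℕ) (jj : ℕ) := ⟨le_refl P.i₁, Nat.le_add_right P.i₁ P.d, rfl⟩
    have h1 := congrFun (congrFun hsum jj) ii
    have h2 : ∑ P' ∈ s, g P' * canonMat k P' jj ii = 0 := by
      simpa [Matrix.sum_apply] using h1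
    rw [Finset.sum_eq_single P] at h2
    · rwa [CBProof.canonMat_apply, if_pos hsp, mul_one] at h2
    · intro P' hP' hne
      rw [CBProof.canonMat_apply, if_neg, mul_zero]
      intro hsp'
      exact hne (CBProof.sp_unique hwred hzred P' P hsp' hsp)
    · intro h
      exact absurd hPs h
  · apply le_antisymm
    · rw [Submodule.span_le]
      rintro x ⟨P, rfl⟩
      exact CBProof.canon_mem k P
    · intro F hF
      exact CBProof.span_aux k hwred hzred hwv hzv _ F hF le_rfl
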